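/- arXiv:2105.07185 — 4 statements merged into one kernel-verified Lean document; each statement's English description precedes it below -/
import Mathlib

section
/- Let R be a standard graded Noetherian ring of dimension d ≥ 2 whose degree-zero part R₀ = (A, 𝔪) is an Artinian local ring, such that 𝔭 = 𝔪R is a prime ideal of R. Let M be a finitely generated graded R-module generated in the single degree t with dim_R M = d and Ass_R M = Min_R M. If M admits a filtration of type (**) with shift t, that is, a chain of graded surjections M = M⁰ ↠ M¹ ↠ ⋯ ↠ M^{i₀} = 0 such that for each 0 ≤ i ≤ i₀−1 the kernel of M^i → M^{i+1} is isomorphic as a graded R-module to (R/𝔭)(−t), then e₁(M) = t·e₀(M) + ℓ_{R_𝔭}(M_𝔭)·e₁(R/𝔭). -/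
open Filter IsLocalRing

/-- The length of a module, as an integer (the Krull dimension of its lattice of
submodules, i.e. the longest chain of submodules; `0` if infinite). -/
noncomputable def moduleLength (R M : Type*) [Ring R] [AddCommGroup M] [Module R M] : ℤ :=
  ((WithBot.unbotD 0 (Order.krullDim (Submodule R M))).toNat : ℤ)

/-- The length of the localization `M_𝔭` over `R_𝔭`. -/
noncomputable def locLength (R : Type*) [CommRing R] (p : Ideal R) [p.IsPrime]
    (M : Type*) [AddCommGroup M] [Module R M] : ℤ :=
  moduleLength (Localization p.primeCompl) (LocalizedModule p.primeCompl M)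

open Order

section Toolkit

-- splitting a chain along an element of a modular lattice
lemma exists_split {α : Type*} [Lattice α] [IsModularLattice α] (a : α) (p : LTSeries α) :
    ∃ (c : LTSeries {b // b ≤ a}) (d : LTSeries {b // a ≤ b}),
      (c.last : α) = a ⊓ p.last ∧ (d.last : α) = a ⊔ p.last ∧
      p.length ≤ c.length + d.length := by
  obtain ⟨n, hn⟩ : ∃ n, p.length = n := ⟨_, rfl⟩
  induction n generalizing p with
  | zero =>
    exact ⟨RelSeries.singleton _ ⟨a ⊓ p.last, inf_le_left⟩,
      RelSeries.singleton _ ⟨a ⊔ p.last, le_sup_left⟩, rfl, rfl, by simp [hn]⟩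
  | succ n ih =>
    have hlen : p.eraseLast.length = n := by simp [RelSeries.eraseLast, hn]
    obtain ⟨c, d, hc, hd, hcd⟩ := ih p.eraseLast hlen
    have hrel : p.eraseLast.last < p.last := p.eraseLast_last_rel_last (by omega)
    have hinf : a ⊓ p.eraseLast.last ≤ a ⊓ p.last := inf_le_inf_left _ hrel.le
    have hsup : a ⊔ p.eraseLast.last ≤ a ⊔ p.last := sup_le_sup_left hrel.le _
    have hne : a ⊓ p.eraseLast.last < a ⊓ p.last ∨ a ⊔ p.eraseLast.last < a ⊔ p.last := by
      by_contra h
      push_neg at h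
      have h1 : a ⊓ p.eraseLast.last = a ⊓ p.last := hinf.lt_or_eq.resolve_left h.1
      have h2 : a ⊔ p.eraseLast.last = a ⊔ p.last := hsup.lt_or_eq.resolve_left h.2
      have := eq_of_le_of_inf_le_of_sup_le hrel.le
        (by rw [inf_comm _ a, inf_comm _ a, h1]) (by rw [sup_comm _ a, sup_comm _ a, h2])
      exact hrel.ne this
    rcases hne with hlt | hlt
    · by_cases hs : a ⊔ p.eraseLast.last < a ⊔ p.last
      · refine ⟨c.snoc ⟨a ⊓ p.last, inf_le_left⟩ (by change _ < _; simpa [hc]),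
          d.snoc ⟨a ⊔ p.last, le_sup_left⟩ (by change _ < _; simpa [hd]),
          by simp, by simp, ?_⟩
        simp [RelSeries.snoc_length]
        omega
      · have h2 : a ⊔ p.eraseLast.last = a ⊔ p.last := hsup.lt_or_eq.resolve_left hs
        refine ⟨c.snoc ⟨a ⊓ p.last, inf_le_left⟩ (by change _ < _; simpa [hc]),
          d, by simp, by rw [hd, h2], ?_⟩
        simp [RelSeries.snoc_length]
        omega
    · by_cases hs : a ⊓ p.eraseLast.last < a ⊓ p.last
      · refine ⟨c.snoc ⟨a ⊓ p.last, inf_le_left⟩ (by change _ < _; simpa [hc]),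
          d.snoc ⟨a ⊔ p.last, le_sup_left⟩ (by change _ < _; simpa [hd]),
          by simp, by simp, by simp [RelSeries.snoc_length]; omega⟩
      · have h1 : a ⊓ p.eraseLast.last = a ⊓ p.last := hinf.lt_or_eq.resolve_left hs
        refine ⟨c, d.snoc ⟨a ⊔ p.last, le_sup_left⟩ (by change _ < _; simpa [hd]),
          by rw [hc, h1], by simp, by simp [RelSeries.snoc_length]; omega⟩

lemma krullDim_add_of_modular {α : Type*} [Lattice α] [IsModularLattice α] (a : α) :
    Order.krullDim α = Order.krullDim {b // b ≤ a} + Order.krullDim {b // a ≤ b} := by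
  have : Nonempty α := ⟨a⟩
  have h1 : Nonempty {b // b ≤ a} := ⟨⟨a, le_rfl⟩⟩
  have h2 : Nonempty {b // a ≤ b} := ⟨⟨a, le_rfl⟩⟩
  rw [Order.krullDim_eq_iSup_length, Order.krullDim_eq_iSup_length,
    Order.krullDim_eq_iSup_length, ← WithBot.coe_add, WithBot.coe_inj]
  apply le_antisymm
  · refine iSup_le fun p => ?_
    obtain ⟨c, d, _, _, hcd⟩ := exists_split a p
    calc (p.length : ℕ∞) ≤ (c.length : ℕ∞) + (d.length : ℕ∞) := by exact_mod_cast hcd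
      _ ≤ _ := add_le_add (le_iSup (fun q : LTSeries {b // b ≤ a} => (q.length : ℕ∞)) c)
          (le_iSup (fun q : LTSeries {b // a ≤ b} => (q.length : ℕ∞)) d)
  · refine ENat.iSup_add_iSup_le fun c d => ?_
    have hc : StrictMono (fun b : {b // b ≤ a} => (b : α)) := fun _ _ h => h
    have hd : StrictMono (fun b : {b // a ≤ b} => (b : α)) := fun _ _ h => h
    set c' : LTSeries α := c.map _ hc with hc'
    set d' : LTSeries α := d.map _ hd with hd'
    have hle : c'.last ≤ d'.head := by
      simp only [hc', hd', LTSeries.last_map, LTSeries.head_map]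
      exact le_trans c.last.2 d.head.2
    rcases eq_or_lt_of_le hle with heq | hlt
    · have := LTSeries.length_le_krullDim (c'.smash d' heq)
      rw [Order.krullDim_eq_iSup_length (α := α)] at this
      have hlen : (c'.smash d' heq).length = c.length + d.length := rfl
      rw [hlen] at this
      exact_mod_cast WithBot.coe_le_coe.mp this
    · have := LTSeries.length_le_krullDim (c'.append d' hlt)
      rw [Order.krullDim_eq_iSup_length (α := α)] at this
      have hlen : (c'.append d' hlt).length = c.length + d.length + 1 := rfl
      rw [hlen] at this
      have := WithBot.coe_le_coe.mp this
      exact le_trans (by exact_mod_cast Nat.le_succ (c.length + d.length)) this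

end Toolkit

section Toolkit2
variable {R X Y : Type*} [Ring R] [AddCommGroup X] [Module R X] [AddCommGroup Y] [Module R Y]

lemma krullDim_submodule_add (W : Submodule R X) :
    Order.krullDim (Submodule R X) =
      Order.krullDim (Submodule R W) + Order.krullDim (Submodule R (X ⧸ W)) := by
  rw [Order.krullDim_eq_of_orderIso (Submodule.MapSubtype.orderIso W),
    Order.krullDim_eq_of_orderIso (Submodule.comapMkQRelIso W)]
  exact krullDim_add_of_modular W

lemma krullDim_submodule_congr (e : X ≃ₗ[R] Y) :
    Order.krullDim (Submodule R X) = Order.krullDim (Submodule R Y) :=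
  Order.krullDim_eq_of_orderIso (Submodule.orderIsoMapComap e)

lemma moduleLength_congr (e : X ≃ₗ[R] Y) : moduleLength R X = moduleLength R Y := by
  unfold moduleLength
  rw [krullDim_submodule_congr e]

lemma krullDim_submodule_of_subsingleton [Subsingleton X] :
    Order.krullDim (Submodule R X) = 0 := by
  have : Subsingleton (Submodule R X) := (Submodule.subsingleton_iff R).mpr ‹_›
  have : Nonempty (Submodule R X) := ⟨⊥⟩
  exact le_antisymm (Order.krullDim_nonpos_of_subsingleton) Order.krullDim_nonneg

lemma krullDim_submodule_of_simple [IsSimpleModule R X] :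
    Order.krullDim (Submodule R X) = 1 := by
  apply le_antisymm
  · rw [Order.krullDim_eq_iSup_length]
    have h1 : (1 : WithBot ℕ∞) = ((1 : ℕ∞) : WithBot ℕ∞) := rfl
    rw [h1]
    refine WithBot.coe_le_coe.mpr (iSup_le fun p => ?_)
    rw [show (1 : ℕ∞) = ((1 : ℕ) : ℕ∞) by norm_cast]
    refine Nat.cast_le.mpr ?_
    by_contra hlen
    push_neg at hlen
    have h2 : 2 ≤ p.length := hlen
    have h01 : p ⟨0, by omega⟩ < p ⟨1, by omega⟩ := p.strictMono (by simp [Fin.lt_def])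
    have h12 : p ⟨1, by omega⟩ < p ⟨2, by omega⟩ := p.strictMono (by simp [Fin.lt_def])
    rcases eq_bot_or_eq_top (p ⟨1, by omega⟩) with h | h
    · rw [h] at h01; exact not_lt_bot h01
    · rw [h] at h12; exact not_top_lt h12
  · have : (RelSeries.singleton {(a, b) : Submodule R X × Submodule R X | a < b} ⊥).last = ⊥ := rfl
    have hlt : (⊥ : Submodule R X) < ⊤ := bot_lt_top
    have := LTSeries.length_le_krullDim
      ((RelSeries.singleton {(a, b) : Submodule R X × Submodule R X | a < b} ⊥).snoc ⊤ hlt)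
    simpa using this

/-- length along a chain of submodules with constant quotient Krull dimension. -/
lemma krullDim_of_chain {k : ℕ} {C : ℕ → Submodule R X}
    (h0 : C 0 = ⊥) (hk : C k = ⊤) (hmono : ∀ i < k, C i ≤ C (i + 1))
    (q : WithBot ℕ∞)
    (hq : ∀ i < k, Order.krullDim
      (Submodule R (↥(C (i + 1)) ⧸ Submodule.comap (C (i + 1)).subtype (C i))) = q) :
    Order.krullDim (Submodule R X) = k • q := by
  have key : ∀ i ≤ k, Order.krullDim (Submodule R (C i)) = i • q := by
    intro i hi
    induction i with
    | zero =>
      have : Subsingleton (C 0) := by rw [h0]; infer_instance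
      simpa using krullDim_submodule_of_subsingleton (R := R) (X := C 0)
    | succ i ih =>
      rw [krullDim_submodule_add (Submodule.comap (C (i + 1)).subtype (C i)),
        krullDim_submodule_congr (Submodule.comapSubtypeEquivOfLe (hmono i hi)),
        ih (by omega), hq i hi, succ_nsmul]
  have := key k le_rfl
  rwa [krullDim_submodule_congr (X := X) (Y := ↥(C k))
    (by rw [hk]; exact Submodule.topEquiv.symm)]
end Toolkit2

section Toolkit3

lemma withbot_nsmul_coe (k : ℕ) (e : ℕ∞) :
    (k • ((e : WithBot ℕ∞))) = ((k • e : ℕ∞) : WithBot ℕ∞) := by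
  induction k with
  | zero => simp
  | succ k ih => rw [succ_nsmul, succ_nsmul, ih, WithBot.coe_add]

lemma enat_toNat_nsmul (k : ℕ) (e : ℕ∞) : (k • e).toNat = k * e.toNat := by
  cases e with
  | top =>
    rcases Nat.eq_zero_or_pos k with h | h
    · simp [h]
    · have : k • (⊤ : ℕ∞) = ⊤ := by
        rw [nsmul_eq_mul]
        exact ENat.mul_top (by exact_mod_cast h.ne')
      simp [this]
  | coe n =>
    rw [nsmul_eq_mul, ← Nat.cast_mul, ENat.toNat_coe, ENat.toNat_coe]

variable {R X Y : Type*} [Ring R] [AddCommGroup X] [Module R X] [AddCommGroup Y] [Module R Y]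

lemma moduleLength_of_chain {k : ℕ} {C : ℕ → Submodule R X}
    (h0 : C 0 = ⊥) (hk : C k = ⊤) (hmono : ∀ i < k, C i ≤ C (i + 1))
    (hq : ∀ i < k, Order.krullDim
      (Submodule R (↥(C (i + 1)) ⧸ Submodule.comap (C (i + 1)).subtype (C i))) =
      Order.krullDim (Submodule R Y)) :
    moduleLength R X = k * moduleLength R Y := by
  have hdim := krullDim_of_chain h0 hk hmono _ hq
  have hpos : (0 : WithBot ℕ∞) ≤ Order.krullDim (Submodule R Y) :=
    Order.krullDim_nonneg (α := Submodule R Y)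
  obtain ⟨e, he⟩ : ∃ e : ℕ∞, Order.krullDim (Submodule R Y) = (e : WithBot ℕ∞) := by
    cases hY : Order.krullDim (Submodule R Y) with
    | bot => rw [hY] at hpos; exact absurd hpos (by simp)
    | coe e => exact ⟨e, rfl⟩
  unfold moduleLength
  rw [hdim, he, withbot_nsmul_coe]
  simp only [WithBot.unbotD_coe]
  rw [enat_toNat_nsmul]
  push_cast
  ring

lemma moduleLength_of_chain_simple {k : ℕ} {C : ℕ → Submodule R X}
    (h0 : C 0 = ⊥) (hk : C k = ⊤) (hmono : ∀ i < k, C i ≤ C (i + 1))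
    (hq : ∀ i < k, IsSimpleModule R
      (↥(C (i + 1)) ⧸ Submodule.comap (C (i + 1)).subtype (C i))) :
    moduleLength R X = k := by
  have hdim := krullDim_of_chain h0 hk hmono 1 (fun i hi =>
    @krullDim_submodule_of_simple R _ _ _ _ (hq i hi))
  unfold moduleLength
  rw [hdim, show (1 : WithBot ℕ∞) = ((1 : ℕ∞) : WithBot ℕ∞) from rfl, withbot_nsmul_coe]
  simp [enat_toNat_nsmul]

end Toolkit3

section Loc

variable {R M : Type*} [CommRing R] [AddCommGroup M] [Module R M]

lemma locLength_of_filtration (p : Ideal R) [hp : p.IsPrime]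
    {i₀ : ℕ} {K : ℕ → Submodule R M} {x : ℕ → M}
    (hK0 : K 0 = ⊥) (hKtop : K i₀ = ⊤)
    (hstep : ∀ i < i₀, K (i + 1) = K i ⊔ Submodule.span R {x i} ∧
      (∀ r : R, r • x i ∈ K i ↔ r ∈ p)) :
    locLength R p M = i₀ := by
  classical
  set S := Localization p.primeCompl
  set f := LocalizedModule.mkLinearMap p.primeCompl M with hf
  set C : ℕ → Submodule S (LocalizedModule p.primeCompl M) :=
    fun i => (K i).localized' S p.primeCompl f with hC
  have hmem : ∀ i (y : LocalizedModule p.primeCompl M),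
      y ∈ C i ↔ ∃ m ∈ K i, ∃ s : p.primeCompl, IsLocalizedModule.mk' f m s = y :=
    fun i y => Iff.rfl
  have hmono : ∀ i < i₀, C i ≤ C (i + 1) := by
    intro i hi
    rintro y ⟨m, hm, s, rfl⟩
    exact ⟨m, (hstep i hi).1 ▸ Submodule.mem_sup_left hm, s, rfl⟩
  have hxK : ∀ i < i₀, x i ∈ K (i + 1) := by
    intro i hi
    rw [(hstep i hi).1]
    exact Submodule.mem_sup_right (Submodule.mem_span_singleton_self _)
  have hxnot : ∀ i < i₀, f (x i) ∉ C i := by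
    intro i hi hmemx
    obtain ⟨m, hm, s, hms⟩ := hmemx
    rw [← IsLocalizedModule.mk'_one (S := p.primeCompl) f (x i)] at hms
    rw [IsLocalizedModule.mk'_eq_mk'_iff] at hms
    obtain ⟨u, hu⟩ := hms
    -- hu : u • s • x i = u • 1 • m
    have h1 : ((u * s : p.primeCompl) : R) • x i ∈ K i := by
      have : (u : R) • (s : R) • x i = (u : R) • m := by
        simpa [Submonoid.smul_def] using hu
      rw [Submonoid.coe_mul, mul_smul, this]
      exact Submodule.smul_mem _ _ hm
    have h2 : ((u * s : p.primeCompl) : R) ∈ p := ((hstep i hi).2 _).mp h1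
    exact (u * s).2 h2
  have hcov : ∀ i < i₀, C i ⋖ C (i + 1) := by
    intro i hi
    have hxC : f (x i) ∈ C (i + 1) :=
      ⟨x i, hxK i hi, 1, IsLocalizedModule.mk'_one _ _ _⟩
    have hlt : C i < C (i + 1) :=
      lt_of_le_of_ne (hmono i hi) (fun h => hxnot i hi (h ▸ hxC))
    -- maximality
    have hmax : ∀ W : Submodule S (LocalizedModule p.primeCompl M),
        C i < W → W ≤ C (i + 1) → W = C (i + 1) := by
      intro W hCW hWC
      obtain ⟨w, hwW, hwC⟩ := SetLike.exists_of_lt hCW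
      obtain ⟨m, hm, s, rfl⟩ := hWC hwW
      rw [(hstep i hi).1] at hm
      obtain ⟨k, hk, z, hz, rfl⟩ := Submodule.mem_sup.mp hm
      obtain ⟨r, rfl⟩ := Submodule.mem_span_singleton.mp hz
      rw [IsLocalizedModule.mk'_add] at hwW hwC
      have hkC : IsLocalizedModule.mk' f k s ∈ C i := ⟨k, hk, s, rfl⟩
      have hw2W : IsLocalizedModule.mk' f (r • x i) s ∈ W := by
        have := W.sub_mem hwW (hCW.le hkC)
        simpa using this
      have hw2C : IsLocalizedModule.mk' f (r • x i) s ∉ C i := by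
        intro h
        exact hwC (Submodule.add_mem _ hkC h)
      have hr : r ∈ p.primeCompl := by
        intro hrp
        exact hw2C ⟨r • x i, ((hstep i hi).2 r).mpr hrp, s, rfl⟩
      -- f (x i) ∈ W
      have hfx : f (x i) ∈ W := by
        have hcalc : IsLocalization.mk' S (s : R) ⟨r, hr⟩ •
            IsLocalizedModule.mk' f (r • x i) s = f (x i) := by
          rw [IsLocalizedModule.mk'_smul_mk']
          have : (s : R) • r • x i = ((⟨r, hr⟩ * s : p.primeCompl) : R) • x i := by
            rw [Submonoid.coe_mul, mul_smul, smul_comm]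
          rw [this, ← Submonoid.smul_def, IsLocalizedModule.mk'_cancel]
        rw [← hcalc]
        exact W.smul_mem _ hw2W
      refine le_antisymm hWC ?_
      rintro y ⟨m', hm', s', rfl⟩
      rw [(hstep i hi).1] at hm'
      obtain ⟨k', hk', z', hz', rfl⟩ := Submodule.mem_sup.mp hm'
      obtain ⟨r', rfl⟩ := Submodule.mem_span_singleton.mp hz'
      rw [IsLocalizedModule.mk'_add]
      refine W.add_mem (hCW.le ⟨k', hk', s', rfl⟩) ?_
      have : IsLocalization.mk' S r' s' • f (x i) =
          IsLocalizedModule.mk' f (r' • x i) s' := by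
        rw [← IsLocalizedModule.mk'_one (S := p.primeCompl) f (x i),
          IsLocalizedModule.mk'_smul_mk', mul_one]
      rw [← this]
      exact W.smul_mem _ hfx
    exact ⟨hlt, fun W h1 h2 => h2.ne (hmax W h1 h2.le)⟩
  have hsimple : ∀ i < i₀, IsSimpleModule S
      (↥(C (i + 1)) ⧸ Submodule.comap (C (i + 1)).subtype (C i)) :=
    fun i hi => (covBy_iff_quot_is_simple (hmono i hi)).mp (hcov i hi)
  have h0 : C 0 = ⊥ := by rw [hC]; simp only [hK0]; exact Submodule.localized'_bot _ _ _
  have htop : C i₀ = ⊤ := by rw [hC]; simp only [hKtop]; exact Submodule.localized'_top _ _ _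
  exact moduleLength_of_chain_simple h0 htop hmono hsimple

end Loc

/-- An `R`-submodule `N` of a graded module `M` is graded if it contains all homogeneous
components of its elements. -/
def IsGradedSubmodule {A R M : Type*} [CommRing A] [CommRing R] [Algebra A R]
    [AddCommGroup M] [Module A M] [Module R M]
    (ℳ : ℤ → Submodule A M) [DirectSum.Decomposition ℳ] (N : Submodule R M) : Prop :=
  ∀ x ∈ N, ∀ n : ℤ, ((DirectSum.decompose ℳ x n : ℳ n) : M) ∈ N

section

variable {A R M : Type*} [CommRing A] [CommRing R] [Algebra A R]
  [AddCommGroup M] [Module A M] [Module R M] [IsScalarTower A R M]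

/-- `M` admits a filtration of type (**) with shift `t`: a chain of graded submodules
`⊥ = K 0 ≤ K 1 ≤ ⋯ ≤ K i₀ = ⊤` such that each quotient `K (i+1) / K i` is a cyclic graded
module generated by a homogeneous element of degree `t` whose annihilator modulo `K i` is
exactly `p`; equivalently, `K (i+1) / K i ≅ (R/p)(−t)` as graded `R`-modules.
This chain of kernels is equivalent to the chain of graded surjections
`M = M⁰ ↠ M¹ ↠ ⋯ ↠ M^{i₀} = 0` with kernels `(R/p)(−t)`. -/
def HasTypeStarStarFiltration (ℳ : ℤ → Submodule A M) [DirectSum.Decomposition ℳ]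
    (p : Ideal R) (t : ℤ) : Prop :=
  ∃ (i₀ : ℕ) (K : ℕ → Submodule R M) (x : ℕ → M),
    K 0 = ⊥ ∧ K i₀ = ⊤ ∧
    ∀ i < i₀, IsGradedSubmodule ℳ (K i) ∧ x i ∈ ℳ t ∧
      K (i + 1) = K i ⊔ Submodule.span R {x i} ∧
      (∀ r : R, r • x i ∈ K i ↔ r ∈ p)

end

section Graded

variable {A R M : Type*} [CommRing A] [CommRing R] [Algebra A R]
  [AddCommGroup M] [Module A M] [Module R M] [IsScalarTower A R M]
  (𝒜 : ℤ → Submodule A R) [GradedAlgebra 𝒜]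
  (ℳ : ℤ → Submodule A M) [SetLike.GradedSMul 𝒜 ℳ] [DirectSum.Decomposition ℳ]

lemma smul_mem_graded {i j : ℤ} {r : R} {m : M} (hr : r ∈ 𝒜 i) (hm : m ∈ ℳ j) :
    r • m ∈ ℳ (i + j) :=
  SetLike.GradedSMul.smul_mem hr hm

lemma decompose_smul_of_mem (t n : ℤ) {x : M} (hx : x ∈ ℳ t) (r : R) :
    ((DirectSum.decompose ℳ (r • x) n : ℳ n) : M) =
      ((DirectSum.decompose 𝒜 r (n - t) : 𝒜 (n - t)) : R) • x := by
  induction r using DirectSum.Decomposition.inductionOn 𝒜 with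
  | zero => simp
  | @homogeneous i m =>
    by_cases h : i + t = n
    · have h1 : ((m : R)) • x ∈ ℳ n := h ▸ smul_mem_graded 𝒜 ℳ m.2 hx
      rw [DirectSum.decompose_of_mem_same ℳ h1]
      have h2 : n - t = i := by omega
      rw [h2, DirectSum.decompose_of_mem_same 𝒜 m.2]
    · have h1 : ((m : R)) • x ∈ ℳ (i + t) := smul_mem_graded 𝒜 ℳ m.2 hx
      rw [DirectSum.decompose_of_mem_ne ℳ h1 h]
      have h2 : i ≠ n - t := by omega
      rw [DirectSum.decompose_of_mem_ne 𝒜 m.2 h2]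
      simp
  | add r r' hr hr' =>
    rw [add_smul, DirectSum.decompose_add, DirectSum.add_apply, Submodule.coe_add, hr, hr',
      DirectSum.decompose_add, DirectSum.add_apply, Submodule.coe_add, add_smul]

lemma gradedLength_of_filtration (p : Ideal R) (t : ℤ)
    {i₀ : ℕ} {K : ℕ → Submodule R M} {x : ℕ → M}
    (hK0 : K 0 = ⊥) (hKtop : K i₀ = ⊤)
    (hstep : ∀ i < i₀, IsGradedSubmodule ℳ (K i) ∧ x i ∈ ℳ t ∧
      K (i + 1) = K i ⊔ Submodule.span R {x i} ∧ (∀ r : R, r • x i ∈ K i ↔ r ∈ p))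
    (n : ℤ) :
    moduleLength A (ℳ n) = i₀ * moduleLength A
      (↥(𝒜 (n - t)) ⧸ Submodule.comap (𝒜 (n - t)).subtype (p.restrictScalars A)) := by
  classical
  set N : ℕ → Submodule A (ℳ n) :=
    fun i => Submodule.comap (ℳ n).subtype ((K i).restrictScalars A) with hN
  have hmemN : ∀ i (y : ℳ n), y ∈ N i ↔ (y : M) ∈ K i := fun i y => Iff.rfl
  have hKmono : ∀ i < i₀, K i ≤ K (i + 1) := by
    intro i hi
    rw [(hstep i hi).2.2.1]
    exact le_sup_left
  have hmono : ∀ i < i₀, N i ≤ N (i + 1) := by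
    intro i hi y hy
    exact (hmemN _ y).mpr (hKmono i hi ((hmemN _ y).mp hy))
  have h0 : N 0 = ⊥ := by
    ext y
    rw [hmemN 0 y, hK0]
    simp
  have htop : N i₀ = ⊤ := by
    ext y
    rw [hmemN i₀ y, hKtop]
    simp
  refine moduleLength_of_chain h0 htop hmono (fun i hi => ?_)
  obtain ⟨hgraded, hxt, hsup, hann⟩ := hstep i hi
  -- the map h : 𝒜 (n - t) →ₗ[A] N (i+1)
  have hmem1 : ∀ a : 𝒜 (n - t), ((a : R) • x i) ∈ ℳ n := by
    intro a
    have := smul_mem_graded 𝒜 ℳ a.2 hxt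
    rwa [sub_add_cancel] at this
  have hmem2 : ∀ a : 𝒜 (n - t), ((a : R) • x i) ∈ K (i + 1) := by
    intro a
    rw [hsup]
    exact Submodule.mem_sup_right (Submodule.mem_span_singleton.mpr ⟨(a : R), rfl⟩)
  set h : ↥(𝒜 (n - t)) →ₗ[A] ↥(N (i + 1)) :=
    { toFun := fun a => ⟨⟨(a : R) • x i, hmem1 a⟩, hmem2 a⟩
      map_add' := by
        intro a b
        ext
        simp [add_smul]
      map_smul' := by
        intro c a
        ext
        simp [smul_assoc] } with hh
  set W : Submodule A ↥(N (i + 1)) := Submodule.comap (N (i + 1)).subtype (N i) with hW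
  set g : ↥(𝒜 (n - t)) →ₗ[A] (↥(N (i + 1)) ⧸ W) := W.mkQ.comp h with hg
  have hker : LinearMap.ker g = Submodule.comap (𝒜 (n - t)).subtype (p.restrictScalars A) := by
    ext a
    rw [LinearMap.mem_ker, hg, LinearMap.comp_apply, Submodule.mkQ_apply,
      Submodule.Quotient.mk_eq_zero]
    change ((a : R) • x i ∈ K i) ↔ _
    rw [hann (a : R)]
    rfl
  have hsurj : Function.Surjective g := by
    intro z
    obtain ⟨y, rfl⟩ := Submodule.mkQ_surjective W z
    set m : M := ((y : ℳ n) : M) with hm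
    have hmn : m ∈ ℳ n := (y : ℳ n).2
    have hmK : m ∈ K (i + 1) := y.2
    rw [hsup] at hmK
    obtain ⟨k, hk, z', hz', hkz⟩ := Submodule.mem_sup.mp hmK
    obtain ⟨r, rfl⟩ := Submodule.mem_span_singleton.mp hz'
    set a : ↥(𝒜 (n - t)) := DirectSum.decompose 𝒜 r (n - t) with ha
    refine ⟨a, ?_⟩
    rw [hg, LinearMap.comp_apply, Submodule.mkQ_apply, Submodule.mkQ_apply,
      Submodule.Quotient.eq]
    have hdiff : m - (a : R) • x i ∈ K i := by
      have hm_eq : m = ((DirectSum.decompose ℳ m n : ℳ n) : M) :=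
        (DirectSum.decompose_of_mem_same ℳ hmn).symm
      have hdec : ((DirectSum.decompose ℳ m n : ℳ n) : M) =
          ((DirectSum.decompose ℳ k n : ℳ n) : M) +
          ((DirectSum.decompose ℳ (r • x i) n : ℳ n) : M) := by
        rw [← hkz]
        rw [DirectSum.decompose_add, DirectSum.add_apply, Submodule.coe_add]
      have hk_comp : ((DirectSum.decompose ℳ k n : ℳ n) : M) ∈ K i := hgraded k hk n
      have hx_comp : ((DirectSum.decompose ℳ (r • x i) n : ℳ n) : M) = (a : R) • x i :=
        decompose_smul_of_mem 𝒜 ℳ t n hxt r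
      have : m - (a : R) • x i = ((DirectSum.decompose ℳ k n : ℳ n) : M) := by
        rw [hm_eq, hdec, hx_comp]
        abel
      rw [this]
      exact hk_comp
    change (h a - y : ↥(N (i + 1))) ∈ W
    rw [hW]
    change ((h a - y : ↥(N (i + 1))) : ℳ n) ∈ N i
    rw [hmemN]
    have : (((h a - y : ↥(N (i + 1))) : ℳ n) : M) = (a : R) • x i - m := rfl
    rw [this]
    have := (K i).neg_mem hdiff
    simpa using this
  have e1 : (↥(𝒜 (n - t)) ⧸ Submodule.comap (𝒜 (n - t)).subtype (p.restrictScalars A))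
      ≃ₗ[A] (↥(N (i + 1)) ⧸ W) :=
    (Submodule.quotEquivOfEq _ _ hker.symm).trans (g.quotKerEquivOfSurjective hsurj)
  exact (krullDim_submodule_congr e1.symm)

end Graded

section Comb
open Filter

def hilb (k : ℕ) (c : ℕ → ℤ) (n : ℕ) : ℤ :=
  ∑ i ∈ Finset.range k, (-1 : ℤ) ^ i * c i * ((n + (k - 1 - i)).choose (k - 1 - i) : ℤ)

lemma hilb_succ (k : ℕ) (c : ℕ → ℤ) (n : ℕ) :
    hilb (k + 1) c (n + 1) = hilb (k + 1) c n + hilb k c (n + 1) := by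
  unfold hilb
  rw [Finset.sum_range_succ, Finset.sum_range_succ (f := fun i =>
    (-1 : ℤ) ^ i * c i * ((n + (k + 1 - 1 - i)).choose (k + 1 - 1 - i) : ℤ))]
  have hlast : (k + 1 - 1 - k) = 0 := by omega
  rw [hlast]
  simp only [Nat.choose_zero_right, Nat.cast_one]
  have key : ∑ i ∈ Finset.range k,
      (-1 : ℤ) ^ i * c i * ((n + 1 + (k + 1 - 1 - i)).choose (k + 1 - 1 - i) : ℤ)
      = ∑ i ∈ Finset.range k,
      ((-1 : ℤ) ^ i * c i * ((n + (k + 1 - 1 - i)).choose (k + 1 - 1 - i) : ℤ)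
        + (-1 : ℤ) ^ i * c i * ((n + 1 + (k - 1 - i)).choose (k - 1 - i) : ℤ)) := by
    refine Finset.sum_congr rfl fun i hi => ?_
    have hik : i < k := Finset.mem_range.mp hi
    obtain ⟨j, hj⟩ : ∃ j, k - 1 - i = j := ⟨_, rfl⟩
    have h1 : k + 1 - 1 - i = j + 1 := by omega
    have h2 : n + 1 + (j + 1) = (n + j + 1) + 1 := by omega
    have h3 : n + (j + 1) = n + j + 1 := by omega
    have h4 : n + 1 + j = n + j + 1 := by omega
    rw [h1, hj, h2, h3, h4, Nat.choose_succ_succ (n + j + 1) j]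
    push_cast
    ring
  rw [key, Finset.sum_add_distrib]
  ring

lemma hilb_two (c : ℕ → ℤ) (n : ℕ) : hilb 2 c n = c 0 * (n + 1) - c 1 := by
  unfold hilb
  rw [Finset.sum_range_succ, Finset.sum_range_succ]
  norm_num [Nat.choose_one_right]
  ring

lemma hilb_extract {k : ℕ} (hk : 2 ≤ k) (c1 c2 : ℕ → ℤ) (w t : ℤ)
    (H : ∀ᶠ m : ℕ in atTop, hilb k c1 ((↑m + t).toNat) = w * hilb k c2 m) :
    c1 0 = w * c2 0 ∧ c1 1 = w * c2 1 + t * (w * c2 0) := by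
  induction k, hk using Nat.le_induction generalizing t with
  | base =>
    obtain ⟨N, hN⟩ := eventually_atTop.mp H
    set m : ℕ := N + t.natAbs + 1 with hm
    have htoNat : ∀ j : ℕ, m ≤ j → (((j : ℤ) + t).toNat : ℤ) = (j : ℤ) + t := by
      intro j hj
      omega
    have e1 := hN m (by omega)
    have e2 := hN (m + 1) (by omega)
    rw [hilb_two, hilb_two, htoNat m le_rfl] at e1
    rw [hilb_two, hilb_two, htoNat (m + 1) (by omega)] at e2
    push_cast at e1 e2
    have first : c1 0 = w * c2 0 := by linear_combination e2 - e1
    refine ⟨first, ?_⟩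
    linear_combination -e1 + ((m : ℤ) + t + 1) * first
  | succ k hk2 ih =>
    refine ih t ?_
    obtain ⟨N, hN⟩ := eventually_atTop.mp H
    rw [eventually_atTop]
    refine ⟨N + t.natAbs + 1, fun m hm => ?_⟩
    obtain ⟨m', rfl⟩ : ∃ m', m = m' + 1 := ⟨m - 1, by omega⟩
    set T : ℕ := ((m' : ℤ) + t).toNat with hT
    have h2 : ((↑(m' + 1) : ℤ) + t).toNat = T + 1 := by omega
    have e1 := hN m' (by omega)
    have e2 := hN (m' + 1) (by omega)
    rw [h2] at e2 ⊢
    have s1 := hilb_succ k c1 T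
    have s2 := hilb_succ k c2 m'
    linear_combination -s1 + e2 - e1 + w * s2
end Comb

/-- **Theorem 1(b), (ii) ⇒ (i)**: if `M` admits a filtration of type (**) with shift `t`,
then `e₁(M) = t·e₀(M) + ℓ_{R_𝔭}(M_𝔭)·e₁(R/𝔭)`. -/
theorem stmt1 {A R M : Type*} [CommRing A] [IsArtinianRing A] [IsLocalRing A]
    [CommRing R] [Algebra A R] [IsNoetherianRing R]
    (𝒜 : ℤ → Submodule A R) [GradedAlgebra 𝒜]
    -- `R` is non-negatively graded with degree-zero part `A`, standard graded:
    (hneg : ∀ n < 0, 𝒜 n = ⊥) (h0 : 𝒜 0 = 1)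
    (hstd : ∀ n : ℤ, 0 ≤ n → 𝒜 (n + 1) = 𝒜 1 * 𝒜 n)
    -- `dim R = d ≥ 2`:
    (d : ℕ) (hd2 : 2 ≤ d) (hdimR : ringKrullDim R = d)
    -- `𝔭 = 𝔪R` is a prime ideal:
    [hp : (Ideal.map (algebraMap A R) (maximalIdeal A)).IsPrime]
    -- `M` is a finitely generated graded `R`-module:
    [AddCommGroup M] [Module A M] [Module R M] [IsScalarTower A R M] [Module.Finite R M]
    (ℳ : ℤ → Submodule A M) [SetLike.GradedSMul 𝒜 ℳ] [DirectSum.Decomposition ℳ]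
    -- `M` is generated in single degree `t`:
    (t : ℤ) (hgen : Submodule.span R (ℳ t : Set M) = ⊤)
    -- `dim_R M = d` and `Ass_R M = Min_R M`:
    (hdimM : ringKrullDim (R ⧸ Module.annihilator R M) = d)
    (hAss : associatedPrimes R M = (Module.annihilator R M).minimalPrimes)
    -- the Hilbert coefficients of `M` and of `R/𝔭`:
    (eM eP : ℕ → ℤ)
    (hM : ∀ᶠ n : ℕ in atTop, moduleLength A (ℳ (n : ℤ)) =
      ∑ i ∈ Finset.range d, (-1 : ℤ) ^ i * eM i * ((n + (d - 1 - i)).choose (d - 1 - i) : ℤ))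
    (hP : ∀ᶠ n : ℕ in atTop,
      moduleLength A (↥(𝒜 (n : ℤ)) ⧸ Submodule.comap (𝒜 (n : ℤ)).subtype
        ((Ideal.map (algebraMap A R) (maximalIdeal A)).restrictScalars A)) =
      ∑ i ∈ Finset.range d, (-1 : ℤ) ^ i * eP i * ((n + (d - 1 - i)).choose (d - 1 - i) : ℤ))
    -- `M` admits a filtration of type (**) with shift `t`:
    (hfil : HasTypeStarStarFiltration ℳ (Ideal.map (algebraMap A R) (maximalIdeal A)) t) :
    eM 1 = t * eM 0 + locLength R (Ideal.map (algebraMap A R) (maximalIdeal A)) M * eP 1 := by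
  classical
  obtain ⟨i₀, K, x, hK0, hKtop, hstep⟩ := hfil
  have hloc : locLength R (Ideal.map (algebraMap A R) (maximalIdeal A)) M = i₀ :=
    locLength_of_filtration _ hK0 hKtop
      (fun i hi => ⟨(hstep i hi).2.2.1, (hstep i hi).2.2.2⟩)
  have hgr := gradedLength_of_filtration 𝒜 ℳ
    (Ideal.map (algebraMap A R) (maximalIdeal A)) t hK0 hKtop hstep
  obtain ⟨N₁, hN₁⟩ := Filter.eventually_atTop.mp hM
  obtain ⟨N₂, hN₂⟩ := Filter.eventually_atTop.mp hP
  have H : ∀ᶠ m : ℕ in atTop, hilb d eM (((m : ℤ) + t).toNat) = (i₀ : ℤ) * hilb d eP m := by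
    rw [Filter.eventually_atTop]
    refine ⟨N₁ + N₂ + t.natAbs + 1, fun m hm => ?_⟩
    set n : ℕ := ((m : ℤ) + t).toNat with hn
    have hnm : (n : ℤ) = (m : ℤ) + t := by omega
    have h1 : moduleLength A (ℳ (n : ℤ)) = hilb d eM n := hN₁ n (by omega)
    have h2 : moduleLength A (↥(𝒜 ((m : ℕ) : ℤ)) ⧸ Submodule.comap (𝒜 ((m : ℕ) : ℤ)).subtype
        ((Ideal.map (algebraMap A R) (maximalIdeal A)).restrictScalars A)) = hilb d eP m :=
      hN₂ m (by omega)
    have h3 := hgr (n : ℤ)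
    rw [show ((n : ℤ) - t) = ((m : ℕ) : ℤ) by omega] at h3
    rw [← h1, h3, h2]
  obtain ⟨hE0, hE1⟩ := hilb_extract hd2 eM eP (i₀ : ℤ) t H
  rw [hloc, hE1, hE0]
  ring
end

section
/- Let R = ⊕_{n≥0} R_n be a standard graded Noetherian ring whose degree-zero part R₀ = (A, 𝔪) is an Artinian local ring, such that 𝔭 = 𝔪R is a prime ideal of R, and let M be a finitely generated graded R-module with Ass_R M = {𝔭}. If M_t ≠ 0 for some integer t, then there exists a homogeneous element x ∈ M_t whose annihilator (0 :_R x) equals 𝔭; equivalently, there is an injective degree-preserving graded R-homomorphism (R/𝔭)(−t) → M. -/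
open IsLocalRing

/-- **Lemma 2.4**: if `Ass_R M = {𝔭}` (where `𝔭 = 𝔪R`) and `M_t ≠ 0`, then there is a
homogeneous element `x ∈ M_t` with `(0 :_R x) = 𝔭`; equivalently there is an injective
degree-preserving graded homomorphism `(R/𝔭)(−t) → M`. -/
theorem stmt4 {A R M : Type*} [CommRing A] [IsArtinianRing A] [IsLocalRing A]
    [CommRing R] [Algebra A R] [IsNoetherianRing R]
    (𝒜 : ℤ → Submodule A R) [GradedAlgebra 𝒜]
    -- `R` is non-negatively graded with degree-zero part `A`, standard graded:
    (hneg : ∀ n < 0, 𝒜 n = ⊥) (h0 : 𝒜 0 = 1)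
    (hstd : ∀ n : ℤ, 0 ≤ n → 𝒜 (n + 1) = 𝒜 1 * 𝒜 n)
    -- `𝔭 = 𝔪R` is a prime ideal:
    [hp : (Ideal.map (algebraMap A R) (maximalIdeal A)).IsPrime]
    -- `M` is a finitely generated graded `R`-module:
    [AddCommGroup M] [Module A M] [Module R M] [IsScalarTower A R M] [Module.Finite R M]
    (ℳ : ℤ → Submodule A M) [SetLike.GradedSMul 𝒜 ℳ] [DirectSum.Decomposition ℳ]
    -- `Ass_R M = {𝔭}`:
    (hAss : associatedPrimes R M = {Ideal.map (algebraMap A R) (maximalIdeal A)})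
    -- `M_t ≠ 0`:
    (t : ℤ) (ht : ℳ t ≠ ⊥) :
    ∃ x : M, x ∈ ℳ t ∧
      ∀ r : R, r • x = 0 ↔ r ∈ Ideal.map (algebraMap A R) (maximalIdeal A) := by
  -- find a nonzero element of `ℳ t`
  obtain ⟨z, hz, hz0⟩ := (Submodule.ne_bot_iff _).mp ht
  -- the maximal ideal of `A` is nilpotent
  obtain ⟨k, hk⟩ : IsNilpotent (maximalIdeal A) := by
    have := IsArtinianRing.isNilpotent_jacobson_bot (R := A)
    rwa [jacobson_eq_maximalIdeal (⊥ : Ideal A) bot_ne_top] at this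
  -- key: produce a nonzero element of `ℳ t` killed by `𝔪`
  have key : ∀ k : ℕ, ∀ z : M, z ∈ ℳ t → z ≠ 0 →
      (∀ a ∈ (maximalIdeal A) ^ k, a • z = 0) →
      ∃ x : M, x ∈ ℳ t ∧ x ≠ 0 ∧ ∀ a ∈ maximalIdeal A, a • x = 0 := by
    intro k
    induction k with
    | zero =>
      intro z _ hz0 hkill
      exact absurd ((one_smul A z).symm.trans
        (hkill 1 (by simp [Ideal.one_eq_top]))) hz0
    | succ k ih =>
      intro z hz hz0 hkill
      by_cases h : ∀ a ∈ maximalIdeal A, a • z = 0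
      · exact ⟨z, hz, hz0, h⟩
      · push_neg at h
        obtain ⟨a, ha, haz⟩ := h
        refine ih (a • z) (Submodule.smul_mem _ a hz) haz ?_
        intro b hb
        have : b * a ∈ (maximalIdeal A) ^ (k + 1) := by
          rw [pow_succ]
          exact Ideal.mul_mem_mul hb ha
        rw [smul_smul]
        exact hkill _ this
  obtain ⟨x, hxt, hx0, hxm⟩ := key k z hz hz0 (by
    intro a ha
    rw [hk] at ha
    simp only [Ideal.zero_eq_bot, Ideal.mem_bot] at ha
    rw [ha, zero_smul])
  refine ⟨x, hxt, fun r => ⟨?_, ?_⟩⟩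
  · -- `r • x = 0 → r ∈ 𝔭`
    intro hr
    obtain ⟨P, hP, hle⟩ := exists_le_isAssociatedPrime_of_isNoetherianRing R x hx0
    have hPmem : P ∈ associatedPrimes R M := hP
    rw [hAss, Set.mem_singleton_iff] at hPmem
    rw [← hPmem]
    exact hle (Submodule.mem_colon_singleton.mpr (by rw [hr]; exact Submodule.zero_mem _))
  · -- `r ∈ 𝔭 → r • x = 0`
    intro hr
    rw [Ideal.map] at hr
    refine Submodule.span_induction ?_ ?_ ?_ ?_ hr
    · rintro _ ⟨a, ha, rfl⟩
      rw [algebraMap_smul]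
      exact hxm a ha
    · rw [zero_smul]
    · intro r s _ _ hrx hsx
      rw [add_smul, hrx, hsx, add_zero]
    · intro s r _ hrx
      rw [smul_eq_mul, mul_smul, hrx, smul_zero]
end

section
/- Let R = ⊕_{n≥0} R_n be a standard graded Noetherian ring whose degree-zero part R₀ = (A, 𝔪) is an Artinian local ring, such that 𝔭 = 𝔪R is a prime ideal of R, and let M be a nonzero finitely generated graded R-module with Ass_R M = {𝔭} and M = R·M_t. Then there exist families of graded R-modules {M^i}_{0≤i≤i₀} and {X^i}_{0≤i≤i₀−1} with M⁰ = M and M^{i₀} = 0 such that for every 0 ≤ i ≤ i₀−1: (a) Ass_R M^i = {𝔭} and M^i = R·(M^i)_t; (b) 𝔭 ∉ Ass_R X^i; and (c) there are graded exact sequences 0 → (R/𝔭)(−t) → M^i → N^i → 0 and 0 → X^i → N^i → M^{i+1} → 0. Moreover i₀ = ℓ_{R_𝔭}(M_𝔭), the length of M_𝔭 over R_𝔭. -/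
open IsLocalRing

set_option linter.unusedSectionVars false
set_option linter.unusedVariables false
set_option linter.unnecessarySimpa false
set_option linter.unusedTactic false
set_option maxHeartbeats 1000000

section LatticeAux
universe u
lemma ltSeries_length_le_of_covby_chain : ∀ (n : ℕ) {α : Type u} [Lattice α] [BoundedOrder α]
    [IsModularLattice α] (W : ℕ → α), W 0 = ⊥ → W n = ⊤ → (∀ i < n, W i ⋖ W (i + 1)) →
    ∀ q : LTSeries α, q.length ≤ n := by
  intro n
  induction n with
  | zero =>
      intro α _ _ _ W h0 hn _ q
      have hbt : (⊥ : α) = ⊤ := h0 ▸ hn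
      by_contra hq
      have hstep := q.step ⟨0, by omega⟩
      have h1 : q (⟨0, by omega⟩ : Fin q.length).castSucc = ⊤ :=
        le_antisymm le_top (hbt ▸ bot_le)
      have h2 : q (⟨0, by omega⟩ : Fin q.length).succ = ⊤ :=
        le_antisymm le_top (hbt ▸ bot_le)
      rw [h1, h2] at hstep
      exact lt_irrefl _ hstep
  | succ n ih =>
      intro α _ _ _ W h0 hn hcov q
      set a : α := W n with ha
      have hatop : a ⋖ ⊤ := by have := hcov n (by omega); rwa [hn] at this
      have hWle : ∀ i ≤ n, W i ≤ a := by
        have key : ∀ d j, j + d ≤ n → W j ≤ W (j + d) := by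
          intro d
          induction d with
          | zero => intro j _; simp
          | succ d ihd =>
              intro j hj
              calc W j ≤ W (j + d) := ihd j (by omega)
                _ ≤ W (j + d + 1) := (hcov (j + d) (by omega)).1.le
        intro i hi
        have := key (n - i) i (by omega)
        rwa [show i + (n - i) = n by omega] at this
      -- the chain restricted to `Set.Iic a`
      set W' : ℕ → Set.Iic a := fun i => if h : i ≤ n then ⟨W i, hWle i h⟩ else ⊤ with hW'
      have hW'0 : W' 0 = ⊥ := by
        apply Subtype.ext
        rw [hW']
        simp only [Nat.zero_le, dif_pos]
        rw [h0, Set.Iic.coe_bot]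
      have hW'n : W' n = ⊤ := by
        apply Subtype.ext
        rw [hW']
        simp only [le_refl, dif_pos]
        rw [Set.Iic.coe_top]
      have hW'cov : ∀ i < n, W' i ⋖ W' (i + 1) := by
        intro i hi
        have e1 : W' i = ⟨W i, hWle i (by omega)⟩ := by rw [hW']; simp [Nat.le_of_lt hi]
        have e2 : W' (i + 1) = ⟨W (i + 1), hWle (i + 1) (by omega)⟩ := by
          rw [hW']; simp [Nat.succ_le_of_lt hi]
        rw [e1, e2]
        constructor
        · exact Subtype.mk_lt_mk.mpr (hcov i (by omega)).1
        · intro c hc1 hc2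
          exact (hcov i (by omega)).2 (Subtype.mk_lt_mk.mp hc1)
            (show (c : α) < W (i + 1) from hc2)
      -- indices as naturals
      set m := q.length with hm
      rcases Nat.eq_zero_or_pos m with hm0 | hmpos
      · omega
      set Q : ℕ → α := fun i => q ⟨min i m, by omega⟩ with hQ
      have hQstep : ∀ i, i < m → Q i < Q (i + 1) := by
        intro i hi
        have : q.toFun (Fin.castSucc ⟨i, hi⟩) < q.toFun (Fin.succ ⟨i, hi⟩) := q.step ⟨i, by omega⟩
        convert this using 2
        · apply Fin.ext; simp [Fin.castSucc]; omega
        · apply Fin.ext; simp [Fin.succ]; omega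
      have hQmono : ∀ i j, i ≤ j → Q i ≤ Q j := fun i j hij =>
        q.monotone (Fin.mk_le_mk.mpr (by omega))
      set r : ℕ → Set.Iic a := fun i => ⟨Q i ⊓ a, Set.mem_Iic.mpr inf_le_right⟩ with hr
      have hrmono : ∀ i j, i ≤ j → r i ≤ r j :=
        fun i j hij => Subtype.mk_le_mk.mpr (inf_le_inf_right a (hQmono i j hij))
      set u : ℕ → α := fun i => Q i ⊔ a with hu
      have humono : ∀ i j, i ≤ j → u i ≤ u j :=
        fun i j hij => sup_le_sup_right (hQmono i j hij) a
      have hu2 : ∀ i, u i = a ∨ u i = ⊤ := by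
        intro i
        rcases eq_or_lt_of_le (le_sup_right : a ≤ u i) with h | h
        · exact Or.inl h.symm
        · right
          by_contra hne
          exact hatop.2 h (lt_top_iff_ne_top.mpr hne)
      have hflat_u : ∀ i, i < m → r i = r (i + 1) → u i = a ∧ u (i + 1) = ⊤ := by
        intro i hi hflat
        have hlt : u i < u (i + 1) := by
          rw [hu]
          exact sup_lt_sup_of_lt_of_inf_le_inf (hQstep i hi)
            (le_of_eq (congrArg Subtype.val hflat).symm)
        constructor
        · rcases hu2 i with h | h
          · exact h
          · exact absurd (h ▸ hlt) (by simp)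
        · rcases hu2 (i + 1) with h | h
          · rcases hu2 i with h' | h'
            · rw [h', h] at hlt; exact absurd hlt (lt_irrefl a)
            · rw [h', h] at hlt
              exact absurd hlt (by simp [hatop.1.le, not_lt, le_top])
          · exact h
      have huniq : ∀ i j, i < m → j < m → r i = r (i + 1) → r j = r (j + 1) → i = j := by
        intro i j hi hj hfi hfj
        by_contra hne
        rcases Nat.lt_or_ge i j with hij | hij
        · have h1 : u (i + 1) = ⊤ := (hflat_u i hi hfi).2
          have h2 : u j = a := (hflat_u j hj hfj).1
          have := humono (i + 1) j (by omega)
          rw [h1, h2] at this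
          exact hatop.ne (le_antisymm le_top this)
        · have hij' : j < i := by omega
          have h1 : u (j + 1) = ⊤ := (hflat_u j hj hfj).2
          have h2 : u i = a := (hflat_u i hi hfi).1
          have := humono (j + 1) i (by omega)
          rw [h1, h2] at this
          exact hatop.ne (le_antisymm le_top this)
      by_cases hflat : ∃ i, i < m ∧ r i = r (i + 1)
      · -- one flat spot: build a series of length m - 1 in `Set.Iic a`
        obtain ⟨i₀, hi₀m, hfi₀⟩ := hflat
        have hstrict : ∀ j, j < m → j ≠ i₀ → r j < r (j + 1) := by
          intro j hj hne
          refine lt_of_le_of_ne (hrmono j (j + 1) (by omega)) fun heq => hne ?_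
          exact huniq j i₀ hj hi₀m heq hfi₀
        set g : ℕ → Set.Iic a := fun j => if j ≤ i₀ then r j else r (j + 1) with hg
        have hgstep : ∀ j, j + 1 ≤ m - 1 → g j < g (j + 1) := by
          intro j hj
          rcases lt_trichotomy j i₀ with h1 | h1 | h1
          · have e1 : g j = r j := by simp only [hg]; rw [if_pos (by omega)]
            have e2 : g (j + 1) = r (j + 1) := by simp only [hg]; rw [if_pos (by omega)]
            rw [e1, e2]
            exact hstrict j (by omega) (by omega)
          · have e1 : g j = r j := by simp only [hg]; rw [if_pos (by omega)]
            have e2 : g (j + 1) = r (j + 2) := by simp only [hg]; rw [if_neg (by omega)]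
            rw [e1, e2, h1, hfi₀, ← h1]
            exact hstrict (j + 1) (by omega) (by omega)
          · have e1 : g j = r (j + 1) := by simp only [hg]; rw [if_neg (by omega)]
            have e2 : g (j + 1) = r (j + 2) := by simp only [hg]; rw [if_neg (by omega)]
            rw [e1, e2]
            exact hstrict (j + 1) (by omega) (by omega)
        have hgfix : ∀ j, j ≤ i₀ → g j = r j := fun j hj => by rw [hg]; simp [hj]
        set q' : LTSeries (Set.Iic a) :=
          ⟨m - 1, fun j => g j, by
            intro j
            have := hgstep j (by omega)
            show g (j : ℕ) < g ((j : ℕ) + 1)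
            convert this using 2⟩ with hq'
        have := ih W' hW'0 hW'n hW'cov q'
        rw [hq'] at this
        simp only [RelSeries.length] at this ⊢
        omega
      · -- no flat spot: `r` itself is strictly increasing
        push_neg at hflat
        set q' : LTSeries (Set.Iic a) :=
          ⟨m, fun j => r j, by
            intro j
            have h1 : (j : ℕ) < m := j.2
            have := lt_of_le_of_ne (hrmono j (j + 1) (by omega)) (hflat j h1)
            show r (j : ℕ) < r ((j : ℕ) + 1)
            convert this using 2⟩ with hq'
        have := ih W' hW'0 hW'n hW'cov q'
        rw [hq'] at this
        simp only [RelSeries.length] at this ⊢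
        omega

end LatticeAux

section GradedAux
open DirectSum
variable {A R M : Type*} [CommRing A] [CommRing R] [Algebra A R]
  [AddCommGroup M] [Module A M] [Module R M] [IsScalarTower A R M]
  (𝒜 : ℤ → Submodule A R) (ℳ : ℤ → Submodule A M)
  [GradedAlgebra 𝒜] [SetLike.GradedSMul 𝒜 ℳ] [DirectSum.Decomposition ℳ]

lemma decompose_homog_smul {r : R} {j : ℤ} (hr : r ∈ 𝒜 j) (m : M) (n : ℤ) :
    (decompose ℳ (r • m) n : M) = r • (decompose ℳ m (n - j) : M) := by
  induction m using DirectSum.Decomposition.inductionOn ℳ with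
  | zero => simp
  | homogeneous m =>
      rename_i i
      have hmem : (m : M) ∈ ℳ i := m.2
      have hsm : r • (m : M) ∈ ℳ (j + i) := SetLike.GradedSMul.smul_mem hr hmem
      by_cases h : n = j + i
      · subst h
        rw [decompose_of_mem_same ℳ hsm,
          decompose_of_mem_same ℳ (show (m:M) ∈ ℳ (j + i - j) by simpa using hmem)]
      · rw [decompose_of_mem_ne ℳ hsm (Ne.symm h),
          decompose_of_mem_ne ℳ hmem (show i ≠ n - j by omega), smul_zero]
  | add x y hx hy =>
      rw [smul_add, decompose_add, DirectSum.add_apply, Submodule.coe_add, hx, hy,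
        decompose_add, DirectSum.add_apply, Submodule.coe_add, smul_add]

lemma decompose_smul_eq_sum [∀ (i : ℤ) (x : 𝒜 i), Decidable (x ≠ 0)] (s : R) (m : M) (n : ℤ) :
    (decompose ℳ (s • m) n : M) =
      ∑ j ∈ (decompose 𝒜 s).support, (decompose 𝒜 s j : R) • (decompose ℳ m (n - j) : M) := by
  conv_lhs => rw [← DirectSum.sum_support_decompose 𝒜 s]
  rw [Finset.sum_smul, decompose_sum, DFinsupp.finset_sum_apply, Submodule.coe_sum]
  exact Finset.sum_congr rfl fun j hj => decompose_homog_smul 𝒜 ℳ (decompose 𝒜 s j).2 m n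

lemma mem_of_all_components {N : Submodule R M} {m : M}
    (hN : ∀ n : ℤ, ((decompose ℳ m n : ℳ n) : M) ∈ N) : m ∈ N := by
  classical
  rw [← DirectSum.sum_support_decompose ℳ m]
  exact N.sum_mem fun j _ => hN j

lemma sup_graded {K N : Submodule R M}
    (hK : ∀ x ∈ K, ∀ n : ℤ, ((decompose ℳ x n : ℳ n) : M) ∈ K)
    (hN : ∀ x ∈ N, ∀ n : ℤ, ((decompose ℳ x n : ℳ n) : M) ∈ N) :
    ∀ x ∈ K ⊔ N, ∀ n : ℤ, ((decompose ℳ x n : ℳ n) : M) ∈ K ⊔ N := by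
  intro m hm n
  obtain ⟨a, ha, b, hb, rfl⟩ := Submodule.mem_sup.mp hm
  rw [decompose_add, DirectSum.add_apply, Submodule.coe_add]
  exact Submodule.add_mem _ (Submodule.mem_sup_left (hK a ha n))
    (Submodule.mem_sup_right (hN b hb n))

include 𝒜 in
lemma span_singleton_graded {x : M} {t : ℤ} (hx : x ∈ ℳ t) :
    ∀ m ∈ Submodule.span R {x}, ∀ n : ℤ,
      ((decompose ℳ m n : ℳ n) : M) ∈ Submodule.span R {x} := by
  classical
  intro m hm n
  obtain ⟨r, rfl⟩ := Submodule.mem_span_singleton.mp hm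
  rw [decompose_smul_eq_sum 𝒜 ℳ]
  refine Submodule.sum_mem _ fun j hj => ?_
  by_cases h : n - j = t
  · rw [h, decompose_of_mem_same ℳ hx]
    exact Submodule.smul_mem _ _ (Submodule.mem_span_singleton_self x)
  · rw [decompose_of_mem_ne ℳ hx (fun ht => h ht.symm), smul_zero]
    exact Submodule.zero_mem _

lemma decompose_pow (τ : R) (c : ℤ) (hlow : ∀ j < c, (decompose 𝒜 τ j : R) = 0) :
    ∀ k : ℕ,
      (∀ j : ℤ, j < ((k : ℤ) + 1) * c → (decompose 𝒜 (τ ^ (k + 1)) j : R) = 0) ∧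
      (decompose 𝒜 (τ ^ (k + 1)) (((k : ℤ) + 1) * c) : R) = (decompose 𝒜 τ c : R) ^ (k + 1) := by
  classical
  intro k
  induction k with
  | zero =>
      constructor
      · intro j hj; rw [pow_one]; exact hlow j (by simpa using hj)
      · rw [pow_one, pow_one, show ((0:ℕ):ℤ) + 1 = 1 by norm_num, one_mul]
  | succ k ih =>
      have hexp : τ ^ (k + 2) = τ • τ ^ (k + 1) := by rw [smul_eq_mul, ← pow_succ']
      have key : ∀ n : ℤ, (decompose 𝒜 (τ ^ (k + 2)) n : R) =
          ∑ j ∈ (decompose 𝒜 τ).support,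
            (decompose 𝒜 τ j : R) • (decompose 𝒜 (τ ^ (k + 1)) (n - j) : R) := by
        intro n; rw [hexp, decompose_smul_eq_sum 𝒜 𝒜]
      have hsupp : ∀ j ∈ (decompose 𝒜 τ).support, c ≤ j := by
        intro j hj
        by_contra hlt
        exact (DFinsupp.mem_support_iff.mp hj) (by
          ext; simpa using hlow j (not_le.mp hlt))
      constructor
      · intro n hn
        push_cast at hn ⊢
        rw [key]
        refine Finset.sum_eq_zero fun j hj => ?_
        have hjc := hsupp j hj
        have : n - j < ((k : ℤ) + 1) * c := by push_cast at hn ⊢; nlinarith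
        rw [ih.1 _ this, smul_zero]
      · push_cast
        rw [key]
        rw [Finset.sum_eq_single c]
        · have harith : ((k : ℤ) + 1 + 1) * c - c = ((k : ℤ) + 1) * c := by ring
          rw [harith, ih.2, smul_eq_mul, ← pow_succ']
        · intro j hj hne
          have hjc := lt_of_le_of_ne (hsupp j hj) (Ne.symm hne)
          have : ((k : ℤ) + 1 + 1) * c - j < ((k : ℤ) + 1) * c := by nlinarith
          rw [ih.1 _ this, smul_zero]
        · intro hc
          have : (decompose 𝒜 τ c : R) = 0 := by
            simpa using DFinsupp.notMem_support_iff.mp hc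
          rw [this, zero_smul]
variable (p : Ideal R)

/-- The set of elements sent into `J` by some homogeneous element outside `p`. -/
def Thom (hp : p.IsPrime) (J : Submodule R M) : Submodule R M where
  carrier := {m | ∃ s : R, (∃ d : ℤ, s ∈ 𝒜 d) ∧ s ∉ p ∧ s • m ∈ J}
  add_mem' := by
    rintro a b ⟨s, ⟨d, hd⟩, hsp, hsa⟩ ⟨u, ⟨e, he⟩, hup, hub⟩
    refine ⟨s * u, ⟨d + e, SetLike.mul_mem_graded hd he⟩,
      fun hmem => ((hp.mem_or_mem hmem).elim hsp hup), ?_⟩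
    rw [smul_add]
    exact add_mem (by rw [mul_comm, mul_smul]; exact J.smul_mem u hsa)
      (by rw [mul_smul]; exact J.smul_mem s hub)
  zero_mem' := ⟨1, ⟨0, SetLike.one_mem_graded 𝒜⟩, (Ideal.ne_top_iff_one p).mp hp.ne_top,
    by rw [smul_zero]; exact J.zero_mem⟩
  smul_mem' := by
    rintro r a ⟨s, hd, hsp, hsa⟩
    exact ⟨s, hd, hsp, by rw [smul_comm]; exact J.smul_mem r hsa⟩

lemma le_Thom (hp : p.IsPrime) (J : Submodule R M) : J ≤ Thom 𝒜 p hp J :=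
  fun m hm => ⟨1, ⟨0, SetLike.one_mem_graded 𝒜⟩, (Ideal.ne_top_iff_one p).mp hp.ne_top,
    by rwa [one_smul]⟩

lemma Thom_graded (hp : p.IsPrime) (J : Submodule R M)
    (hJ : ∀ x ∈ J, ∀ n : ℤ, ((decompose ℳ x n : ℳ n) : M) ∈ J) :
    ∀ x ∈ Thom 𝒜 p hp J, ∀ n : ℤ, ((decompose ℳ x n : ℳ n) : M) ∈ Thom 𝒜 p hp J := by
  rintro x ⟨s, ⟨d, hd⟩, hsp, hsx⟩ n
  refine ⟨s, ⟨d, hd⟩, hsp, ?_⟩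
  have := hJ _ hsx (n + d)
  rwa [decompose_homog_smul 𝒜 ℳ hd, add_sub_cancel_right] at this

lemma thom_decompose_mem (hp : p.IsPrime) (ν : ℕ) (hν1 : 1 ≤ ν) (hν : ∀ h ∈ p, h ^ ν = 0)
    (J : Submodule R M) (hJ : ∀ x ∈ J, ∀ n : ℤ, ((decompose ℳ x n : ℳ n) : M) ∈ J)
    {s : R} (hs : s ∉ p) {m : M} (hsm : s • m ∈ J) (n : ℤ) :
    ((decompose ℳ m n : ℳ n) : M) ∈ Thom 𝒜 p hp J := by
  classical
  suffices H : ∀ (N : ℕ) (m : M), (decompose ℳ m).support.card ≤ N →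
      ∀ s, s ∉ p → s • m ∈ J → ∀ n : ℤ, ((decompose ℳ m n : ℳ n) : M) ∈ Thom 𝒜 p hp J by
    exact H _ m le_rfl s hs hsm n
  clear hs hsm n s m
  intro N
  induction N with
  | zero =>
      intro m hcard s hs hsm n
      have hsupp : (decompose ℳ m).support = ∅ := Finset.card_eq_zero.mp (Nat.le_zero.mp hcard)
      have h0 : decompose ℳ m n = 0 :=
        DFinsupp.notMem_support_iff.mp (by simp [hsupp])
      rw [h0]
      simpa using (Thom 𝒜 p hp J).zero_mem
  | succ N ih =>
      intro m hcard s hs hsm n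
      by_cases hm0 : (decompose ℳ m).support.Nonempty
      swap
      · rw [Finset.not_nonempty_iff_eq_empty] at hm0
        have h0 : decompose ℳ m n = 0 := DFinsupp.notMem_support_iff.mp (by simp [hm0])
        rw [h0]; simpa using (Thom 𝒜 p hp J).zero_mem
      -- Step 1: build ω with ω • m ∈ J, low components vanishing, lowest component not in p
      set D := (decompose 𝒜 s).support with hD
      set B := D.filter (fun j => (decompose 𝒜 s j : R) ∉ p) with hBdef
      have hsum : ∑ j ∈ D, (decompose 𝒜 s j : R) = s := DirectSum.sum_support_decompose 𝒜 s
      have hB : B.Nonempty := by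
        by_contra hBe
        rw [Finset.not_nonempty_iff_eq_empty] at hBe
        apply hs
        rw [← hsum]
        refine Ideal.sum_mem _ fun j hj => ?_
        by_contra hnp
        exact (Finset.eq_empty_iff_forall_notMem.mp hBe j) (Finset.mem_filter.mpr ⟨hj, hnp⟩)
      set h : R := ∑ j ∈ D.filter (fun j => ¬ ((decompose 𝒜 s j : R) ∉ p)),
        (decompose 𝒜 s j : R) with hh
      have hhp : h ∈ p := Ideal.sum_mem _ fun j hj => not_not.mp (Finset.mem_filter.mp hj).2
      set τ := s - h with hτ
      have hτsum : τ = ∑ j ∈ B, (decompose 𝒜 s j : R) := by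
        have hsplit := Finset.sum_filter_add_sum_filter_not D
          (fun j => (decompose 𝒜 s j : R) ∉ p) (fun j => (decompose 𝒜 s j : R))
        rw [hτ, hh, hBdef, sub_eq_iff_eq_add]
        conv_lhs => rw [← hsum]
        exact hsplit.symm
      have hτcomp : ∀ j : ℤ, (decompose 𝒜 τ j : R) =
          if j ∈ B then (decompose 𝒜 s j : R) else 0 := by
        intro j
        rw [hτsum, decompose_sum, DFinsupp.finset_sum_apply, Submodule.coe_sum]
        by_cases hjB : j ∈ B
        · rw [if_pos hjB, Finset.sum_eq_single_of_mem j hjB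
            (fun b hb hbj => decompose_of_mem_ne 𝒜 (decompose 𝒜 s b).2 hbj),
            decompose_of_mem_same 𝒜 (decompose 𝒜 s j).2]
        · rw [if_neg hjB]
          exact Finset.sum_eq_zero fun b hb =>
            decompose_of_mem_ne 𝒜 (decompose 𝒜 s b).2 (fun hbj => hjB (hbj ▸ hb))
      have hτp : τ ∉ p := fun hc => hs (by
        have hse : s = τ + h := by rw [hτ]; ring
        rw [hse]; exact Ideal.add_mem p hc hhp)
      set c' := B.min' hB with hc'
      have hlow : ∀ j < c', (decompose 𝒜 τ j : R) = 0 := by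
        intro j hj
        rw [hτcomp, if_neg (fun hjB => absurd (B.min'_le j hjB) (not_le.mpr hj))]
      have hτc'p : (decompose 𝒜 τ c' : R) ∉ p := by
        rw [hτcomp, if_pos (B.min'_mem hB)]
        exact (Finset.mem_filter.mp (B.min'_mem hB)).2
      set ω := τ ^ ν with hω
      obtain ⟨hωlow, hωtop⟩ := decompose_pow 𝒜 τ c' hlow (ν - 1)
      rw [Nat.sub_add_cancel hν1] at hωlow hωtop
      have hνn : ((ν - 1 : ℕ) : ℤ) + 1 = (ν : ℤ) := by
        rw [Nat.cast_sub hν1]; ring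
      rw [hνn] at hωlow hωtop
      rw [← hω] at hωlow hωtop
      set c : ℤ := (ν : ℤ) * c' with hc
      have hωcp : (decompose 𝒜 ω c : R) ∉ p := by
        rw [hω, hc, hωtop]
        exact fun hcon => hτc'p (hp.mem_of_pow_mem _ hcon)
      have hωp : ω ∉ p := fun hcon => hτp (hp.mem_of_pow_mem _ hcon)
      have hωm : ω • m ∈ J := by
        have hsub : τ = s - h := hτ
        rw [hω, hsub, sub_pow, Finset.sum_smul]
        refine J.sum_mem fun i hi => ?_
        rcases Nat.eq_zero_or_pos i with rfl | hipos
        · have hzz : h ^ (ν - 0) = 0 := by rw [Nat.sub_zero, hν h hhp]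
          rw [hzz]
          simp
        · obtain ⟨i', rfl⟩ : ∃ i', i = i' + 1 :=
            ⟨i - 1, (Nat.succ_pred_eq_of_pos hipos).symm⟩
          have hre : ((-1 : R) ^ (i' + 1 + ν) * s ^ (i' + 1) * h ^ (ν - (i' + 1))
                * ((ν.choose (i' + 1) : ℕ) : R)) • m
              = ((-1 : R) ^ (i' + 1 + ν) * s ^ i' * h ^ (ν - (i' + 1))
                * ((ν.choose (i' + 1) : ℕ) : R)) • (s • m) := by
            rw [smul_smul]
            ring_nf
          rw [hre]
          exact J.smul_mem _ hsm
      -- Step 2 : the lowest component of m is in Thom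
      set e := (decompose ℳ m).support.min' hm0 with he
      have hme : ∀ f, f < e → (decompose ℳ m f : M) = 0 := by
        intro f hf
        by_contra h0
        have hf' : f ∈ (decompose ℳ m).support :=
          DFinsupp.mem_support_iff.mpr (fun hz => h0 (by rw [hz]; rfl))
        exact absurd ((decompose ℳ m).support.min'_le f hf') (not_le.mpr hf)
      have hkey : (decompose 𝒜 ω c : R) • (decompose ℳ m e : M) ∈ J := by
        have h1 : ((decompose ℳ (ω • m) (c + e) : ℳ (c + e)) : M) ∈ J := hJ _ hωm _
        rw [decompose_smul_eq_sum 𝒜 ℳ] at h1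
        rw [Finset.sum_eq_single c] at h1
        · rwa [add_sub_cancel_left] at h1
        · intro j hj hne
          have hjc : c ≤ j := by
            by_contra hlt
            exact DFinsupp.mem_support_iff.mp hj (by ext; simpa using hωlow j (not_le.mp hlt))
          have hlt : c + e - j < e := by
            have : c < j := lt_of_le_of_ne hjc (Ne.symm hne)
            omega
          rw [hme _ hlt, smul_zero]
        · intro hc0
          have : (decompose 𝒜 ω c : R) = 0 := by
            rw [DFinsupp.notMem_support_iff.mp hc0]; rfl
          rw [this, zero_smul]
      have hThome : (decompose ℳ m e : M) ∈ Thom 𝒜 p hp J :=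
        ⟨_, ⟨c, (decompose 𝒜 ω c).2⟩, hωcp, hkey⟩
      -- Step 3 : recurse on m minus its lowest component
      set m' := m - (decompose ℳ m e : M) with hm'
      have hm'comp : ∀ f : ℤ,
          (decompose ℳ m' f : M) = if f = e then 0 else (decompose ℳ m f : M) := by
        intro f
        rw [hm', decompose_sub, DirectSum.sub_apply, Submodule.coe_sub]
        by_cases hf : f = e
        · rw [if_pos hf, hf, decompose_of_mem_same ℳ (decompose ℳ m e).2, sub_self]
        · rw [if_neg hf, decompose_of_mem_ne ℳ (decompose ℳ m e).2
            (fun hef => hf hef.symm), sub_zero]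
      have hsubsupp : (decompose ℳ m').support ⊆ (decompose ℳ m).support.erase e := by
        intro f hf
        have hf0 : (decompose ℳ m' f : M) ≠ 0 := by
          intro hz
          exact DFinsupp.mem_support_iff.mp hf (by ext; rw [hz]; rfl)
        rw [hm'comp] at hf0
        by_cases hfe : f = e
        · rw [if_pos hfe] at hf0; exact absurd rfl hf0
        · rw [if_neg hfe] at hf0
          exact Finset.mem_erase.mpr ⟨hfe, DFinsupp.mem_support_iff.mpr
            (fun hz => hf0 (by rw [hz]; rfl))⟩
      have hcard' : (decompose ℳ m').support.card ≤ N := by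
        have h1 := Finset.card_le_card hsubsupp
        have h2 : ((decompose ℳ m).support.erase e).card
            = (decompose ℳ m).support.card - 1 :=
          Finset.card_erase_of_mem ((decompose ℳ m).support.min'_mem hm0)
        have h3 : 1 ≤ (decompose ℳ m).support.card := Finset.card_pos.mpr hm0
        omega
      have hs' : ω * (decompose 𝒜 ω c : R) ∉ p :=
        fun hcon => (hp.mem_or_mem hcon).elim hωp hωcp
      have hs'm : (ω * (decompose 𝒜 ω c : R)) • m' ∈ J := by
        have he1 : (ω * (decompose 𝒜 ω c : R)) • m = (decompose 𝒜 ω c : R) • (ω • m) := by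
          rw [mul_comm, mul_smul]
        have he2 : (ω * (decompose 𝒜 ω c : R)) • (decompose ℳ m e : M)
            = ω • ((decompose 𝒜 ω c : R) • (decompose ℳ m e : M)) := mul_smul _ _ _
        rw [hm', smul_sub, he1, he2]
        exact sub_mem (J.smul_mem _ hωm) (J.smul_mem _ hkey)
      have hall := ih m' hcard' _ hs' hs'm
      by_cases hfe : n = e
      · subst hfe; exact hThome
      · have hres := hall n
        rw [hm'comp n, if_neg hfe] at hres
        exact hres

lemma thom_sat (hp : p.IsPrime) (ν : ℕ) (hν1 : 1 ≤ ν) (hν : ∀ h ∈ p, h ^ ν = 0)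
    (J : Submodule R M) (hJ : ∀ x ∈ J, ∀ n : ℤ, ((decompose ℳ x n : ℳ n) : M) ∈ J) :
    ∀ s : R, s ∉ p → ∀ m : M, s • m ∈ Thom 𝒜 p hp J → m ∈ Thom 𝒜 p hp J := by
  intro s hs m hm
  obtain ⟨u, ⟨d, hud⟩, hup, husm⟩ := hm
  have hus : (u * s) • m ∈ J := by rw [mul_smul]; exact husm
  have husp : u * s ∉ p := fun hc => (hp.mem_or_mem hc).elim hup hs
  exact mem_of_all_components ℳ fun n =>
    thom_decompose_mem 𝒜 ℳ p hp ν hν1 hν J hJ husp hus n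


end GradedAux

section AssAux
variable {A R M : Type*} [CommRing A] [CommRing R] [Algebra A R]
  [AddCommGroup M] [Module A M] [Module R M] [IsScalarTower A R M]
  (p : Ideal R)

lemma sat_of_ass_singleton [IsNoetherianRing R]
    (hAss : associatedPrimes R M = {p}) {s : R} (hs : s ∉ p) {m : M} (hsm : s • m = 0) :
    m = 0 := by
  by_contra hm
  obtain ⟨P, hP, hle⟩ := exists_le_isAssociatedPrime_of_isNoetherianRing R m hm
  have hPp : P = p := by
    have := hAss ▸ (AssociatedPrimes.mem_iff.mpr hP)
    simpa using this
  exact hs (hPp ▸ hle (Submodule.mem_colon_singleton.mpr ((Submodule.mem_bot R).mpr hsm)))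

lemma ass_quot_eq_singleton [IsNoetherianRing R] (hp : p.IsPrime)
    (hnil : ∀ P : Ideal R, P.IsPrime → p ≤ P)
    (K : Submodule R M) (hK : K ≠ ⊤)
    (hsat : ∀ (s : R), s ∉ p → ∀ m : M, s • m ∈ K → m ∈ K) :
    associatedPrimes R (M ⧸ K) = {p} := by
  have hforward : ∀ P ∈ associatedPrimes R (M ⧸ K), P = p := by
    rintro P hP
    obtain ⟨hPp, y, hy⟩ := isAssociatedPrime_iff.mp hP
    have hyne : y ≠ 0 := by
      rintro rfl
      rw [Submodule.colon_singleton_zero] at hy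
      exact hPp.ne_top hy
    refine le_antisymm ?_ (hnil P hPp)
    intro s hsP
    obtain ⟨m, rfl⟩ := Submodule.Quotient.mk_surjective K y
    have hsy : s • Submodule.Quotient.mk (p := K) m = 0 := by
      rw [hy, Submodule.mem_colon_singleton, Submodule.mem_bot] at hsP; exact hsP
    rw [← Submodule.Quotient.mk_smul, Submodule.Quotient.mk_eq_zero] at hsy
    by_contra hsp
    exact hyne (by rw [Submodule.Quotient.mk_eq_zero]; exact hsat s hsp m hsy)
  ext P
  simp only [Set.mem_singleton_iff]
  constructor
  · exact hforward P
  · rintro rfl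
    have : Nontrivial (M ⧸ K) := Submodule.Quotient.nontrivial_iff.mpr hK
    obtain ⟨P', hP'⟩ := associatedPrimes.nonempty R (M ⧸ K)
    exact (hforward P' hP') ▸ hP'

lemma p_not_assoc_torsion (J K' : Submodule R M)
    (htors : ∀ m ∈ K', ∃ s : R, s ∉ p ∧ s • m ∈ J) :
    p ∉ associatedPrimes R ↥(K'.map J.mkQ) := by
  rintro ⟨hPp, y, hy⟩
  obtain ⟨m, hmK', hmy⟩ := Submodule.mem_map.mp y.2
  obtain ⟨s, hsp, hsJ⟩ := htors m hmK'
  apply hsp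
  rw [hy]
  apply Ideal.le_radical
  rw [Submodule.mem_colon_singleton, Submodule.mem_bot]
  apply Subtype.ext
  show s • (y : M ⧸ J) = 0
  rw [← hmy, ← map_smul, Submodule.mkQ_apply, Submodule.Quotient.mk_eq_zero]
  exact hsJ

lemma exists_socle_elt [IsNoetherianRing R] (ℳ : ℤ → Submodule A M) (t : ℤ)
    (hp : p.IsPrime) (K : Submodule R M) (hKt : ¬ ((ℳ t : Set M) ⊆ K))
    (I : Ideal A) (k : ℕ) (hIk : I ^ k = ⊥)
    (hpI : p = Ideal.map (algebraMap A R) I)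
    (hAssK : associatedPrimes R (M ⧸ K) = {p}) :
    ∃ x ∈ ℳ t, ∀ r : R, r • x ∈ K ↔ r ∈ p := by
  obtain ⟨z, hzt, hzK⟩ : ∃ z ∈ ℳ t, z ∉ K := by
    rcases Set.not_subset.mp hKt with ⟨z, hz1, hz2⟩
    exact ⟨z, hz1, hz2⟩
  have hex : ∃ j : ℕ, ∀ a ∈ I ^ j, a • z ∈ K := by
    refine ⟨k, fun a ha => ?_⟩
    rw [hIk, Ideal.mem_bot] at ha
    rw [ha, zero_smul]
    exact K.zero_mem
  classical
  set j := Nat.find hex with hj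
  have hjspec := Nat.find_spec hex
  have hj1 : 1 ≤ j := by
    rcases Nat.eq_zero_or_pos j with h0 | h1
    · exfalso
      have := hjspec
      rw [← hj, h0] at this
      exact hzK (by simpa using this 1 (by simp [Ideal.one_eq_top]))
    · exact h1
  have hmin : ¬ (∀ a ∈ I ^ (j - 1), a • z ∈ K) := Nat.find_min hex (by omega)
  push_neg at hmin
  obtain ⟨a, haI, hazK⟩ := hmin
  refine ⟨a • z, Submodule.smul_mem _ a hzt, fun r => ?_⟩
  set x := a • z with hx
  set q : Ideal R := Submodule.comap (LinearMap.toSpanSingleton R M x) K with hq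
  have hpq : p ≤ q := by
    rw [hpI, Ideal.map_le_iff_le_comap]
    intro b hb
    show algebraMap A R b • x ∈ K
    rw [algebraMap_smul, hx, smul_smul]
    have : b * a ∈ I ^ j := by
      have hpow : I ^ j = I * I ^ (j - 1) := by
        conv_lhs => rw [show j = (j - 1) + 1 by omega]
        rw [pow_succ']
      rw [hpow]
      exact Ideal.mul_mem_mul hb haI
    exact hjspec _ this
  have hqp : q ≤ p := by
    have hxne : (Submodule.Quotient.mk (p := K) x) ≠ 0 := by
      rw [Ne, Submodule.Quotient.mk_eq_zero]; exact hazK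
    obtain ⟨P, hP, hle⟩ :=
      exists_le_isAssociatedPrime_of_isNoetherianRing R (Submodule.Quotient.mk (p := K) x) hxne
    have hPp : P = p := by
      have := hAssK ▸ (AssociatedPrimes.mem_iff.mpr hP)
      simpa using this
    refine le_trans ?_ (hPp ▸ hle)
    intro r hr
    rw [Submodule.mem_colon_singleton, Submodule.mem_bot, ← Submodule.Quotient.mk_smul,
      Submodule.Quotient.mk_eq_zero]
    exact hr
  have hqp' : q = p := le_antisymm hqp hpq
  show r • x ∈ K ↔ r ∈ p
  rw [← hqp']
  rfl

end AssAux

section LocAux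
variable {R M : Type*} [CommRing R] [AddCommGroup M] [Module R M]

/-- If the ideal of scalars sending `ξ` into `W` is maximal, then `W ⊔ span {ξ}` covers `W`. -/
lemma covby_of_colon_maximal (W : Submodule R M) (ξ : M)
    (𝔫 : Ideal R) (h𝔫 : 𝔫.IsMaximal) (hcolon : ∀ r : R, r • ξ ∈ W ↔ r ∈ 𝔫) :
    W ⋖ (W ⊔ Submodule.span R {ξ}) := by
  have hξ : ξ ∉ W := by
    intro hmem
    exact h𝔫.ne_top ((Ideal.eq_top_iff_one 𝔫).mpr ((hcolon 1).mp (by rwa [one_smul])))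
  constructor
  · refine lt_of_le_of_ne le_sup_left fun heq => hξ ?_
    exact heq ▸ Submodule.mem_sup_right (Submodule.mem_span_singleton_self ξ)
  · intro V hWV hVT
    obtain ⟨v, hvV, hvW⟩ := SetLike.exists_of_lt hWV
    have hvT : v ∈ W ⊔ Submodule.span R {ξ} := hVT.le hvV
    obtain ⟨w, hw, u, hu, rfl⟩ := Submodule.mem_sup.mp hvT
    obtain ⟨r, rfl⟩ := Submodule.mem_span_singleton.mp hu
    have hrξV : r • ξ ∈ V := by
      have := V.sub_mem hvV (hWV.le hw)
      simpa using this
    have hrn : r ∉ 𝔫 := by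
      intro hr
      exact hvW (W.add_mem hw ((hcolon r).mpr hr))
    obtain ⟨y, i, hi, hyi⟩ := h𝔫.exists_inv hrn
    have hξV : ξ ∈ V := by
      have h1 : (y * r + i) • ξ = ξ := by rw [hyi, one_smul]
      have h2 : (y * r) • ξ ∈ V := by rw [mul_smul]; exact V.smul_mem y hrξV
      have h3 : i • ξ ∈ V := hWV.le ((hcolon i).mpr hi)
      have h4 : ξ = (y * r) • ξ + i • ξ := by rw [← add_smul, h1]
      rw [h4]
      exact V.add_mem h2 h3
    have : W ⊔ Submodule.span R {ξ} ≤ V :=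
      sup_le hWV.le ((Submodule.span_singleton_le_iff_mem ξ V).mpr hξV)
    exact absurd hVT (not_lt_of_ge this)

variable (p : Ideal R) [hp : p.IsPrime]

local notation "Rp" => Localization p.primeCompl
local notation "f" => LocalizedModule.mkLinearMap p.primeCompl M

lemma localized_mono {K K' : Submodule R M} (h : K ≤ K') :
    K.localized' Rp p.primeCompl f ≤ K'.localized' Rp p.primeCompl f := by
  rintro x ⟨m, hm, s, rfl⟩
  exact ⟨m, h hm, s, rfl⟩

lemma localized_eq_of_sat (K K' : Submodule R M) (hle : K ≤ K')
    (htors : ∀ m ∈ K', ∃ s : R, s ∉ p ∧ s • m ∈ K) :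
    K'.localized' Rp p.primeCompl f = K.localized' Rp p.primeCompl f := by
  refine le_antisymm ?_ (localized_mono p hle)
  rintro x ⟨m, hm, s, rfl⟩
  obtain ⟨u, hup, hum⟩ := htors m hm
  exact ⟨(⟨u, hup⟩ : p.primeCompl) • m, hum, (⟨u, hup⟩ : p.primeCompl) * s,
    IsLocalizedModule.mk'_cancel_left _ _ _ _⟩

lemma localized_sup_span (K : Submodule R M) (x : M) :
    (K ⊔ Submodule.span R {x}).localized' Rp p.primeCompl f
      = K.localized' Rp p.primeCompl f ⊔ Submodule.span Rp {f x} := by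
  refine le_antisymm ?_ (sup_le (localized_mono p le_sup_left) ?_)
  · rintro z ⟨m, hm, s, rfl⟩
    obtain ⟨w, hw, u, hu, rfl⟩ := Submodule.mem_sup.mp hm
    obtain ⟨r, rfl⟩ := Submodule.mem_span_singleton.mp hu
    rw [IsLocalizedModule.mk'_add]
    refine Submodule.add_mem _ (Submodule.mem_sup_left ⟨w, hw, s, rfl⟩)
      (Submodule.mem_sup_right ?_)
    rw [Submodule.mem_span_singleton]
    refine ⟨IsLocalization.mk' Rp r s, ?_⟩
    rw [← IsLocalizedModule.mk'_one (S := p.primeCompl) f, IsLocalizedModule.mk'_smul_mk', mul_one]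
  · rw [Submodule.span_le, Set.singleton_subset_iff]
    exact ⟨x, Submodule.mem_sup_right (Submodule.mem_span_singleton_self x), 1,
      IsLocalizedModule.mk'_one _ _ _⟩

lemma localized_colon (K : Submodule R M)
    (hsat : ∀ s : R, s ∉ p → ∀ m : M, s • m ∈ K → m ∈ K)
    (x : M) (hx : ∀ r : R, r • x ∈ K ↔ r ∈ p) (z : Rp) :
    z • f x ∈ K.localized' Rp p.primeCompl f ↔ z ∈ p.map (algebraMap R Rp) := by
  constructor
  · intro hz
    obtain ⟨⟨r, s⟩, rfl⟩ := IsLocalization.mk'_surjective p.primeCompl z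
    have he : IsLocalization.mk' Rp r s • f x = IsLocalizedModule.mk' f (r • x) s := by
      rw [← IsLocalizedModule.mk'_one (S := p.primeCompl) f, IsLocalizedModule.mk'_smul_mk', mul_one]
    rw [he] at hz
    obtain ⟨m, hm, u, hu⟩ := hz
    rw [IsLocalizedModule.mk'_eq_mk'_iff] at hu
    obtain ⟨c, hc⟩ := hu
    -- hc : c • u • (r • x) = c • s • m
    have hcK : (c • u • (r • x) : M) ∈ K := by
      rw [hc]
      exact K.smul_mem _ (K.smul_mem _ hm)
    have : ((c : R) * u * r) • x ∈ K := by
      rwa [mul_smul, mul_smul, ← Submonoid.smul_def, ← Submonoid.smul_def]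
    have hmem : (c : R) * u * r ∈ p := (hx _).mp this
    have hrp : r ∈ p := by
      rcases hp.mem_or_mem hmem with h1 | h2
      · rcases hp.mem_or_mem h1 with h3 | h4
        · exact absurd h3 c.2
        · exact absurd h4 u.2
      · exact h2
    show IsLocalization.mk' Rp r s ∈ _
    rw [IsLocalization.mk'_eq_mul_mk'_one]
    exact Ideal.mul_mem_right _ _ (Ideal.mem_map_of_mem _ hrp)
  · intro hz
    have hspan : p.map (algebraMap R Rp) = Submodule.span Rp ((algebraMap R Rp) '' p) :=
      rfl
    rw [hspan] at hz
    induction hz using Submodule.span_induction with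
    | mem w hw =>
        obtain ⟨r, hr, rfl⟩ := hw
        have : (algebraMap R Rp r) • (f x) = f (r • x) := by
          rw [algebraMap_smul, map_smul]
        rw [this]
        exact ⟨r • x, (hx r).mpr hr, 1, IsLocalizedModule.mk'_one _ _ _⟩
    | zero => rw [zero_smul]; exact Submodule.zero_mem _
    | add a b _ _ ha hb => rw [add_smul]; exact Submodule.add_mem _ ha hb
    | smul a b _ hb => rw [smul_assoc]; exact Submodule.smul_mem _ _ hb
lemma krullDim_eq_of_covby_chain {α : Type*} [Lattice α] [BoundedOrder α] [IsModularLattice α]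
    (n : ℕ) (W : ℕ → α) (h0 : W 0 = ⊥) (hn : W n = ⊤) (hcov : ∀ i < n, W i ⋖ W (i + 1)) :
    Order.krullDim α = n := by
  apply le_antisymm
  · exact iSup_le fun q => by
      exact_mod_cast ltSeries_length_le_of_covby_chain n W h0 hn hcov q
  · exact Order.LTSeries.length_le_krullDim ⟨n, fun j => W j, fun j => by
      have : W (j : ℕ) < W ((j : ℕ) + 1) := (hcov j j.2).lt
      simpa using this⟩


end LocAux


/-- **Proposition 2.5**: if `Ass_R M = {𝔭}` and `M = R·M_t ≠ 0`, there are families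
`{M^i}` and `{X^i}` as in the commutative diagrams (*).  We encode the family of graded
residue modules `M^i = M/K i` by the increasing chain of graded kernels `K i`, the graded
monomorphism `(R/𝔭)(−t) → M^i` by a homogeneous element `x i` of degree `t` whose
annihilator modulo `K i` is `𝔭` (so `N^i = M/(K i + R·x i)`), and
`X^i = K (i+1)/(K i + R·x i) ⊆ N^i` (so that `N^i/X^i = M^{i+1}` is automatic, giving the
exact sequences `0 → (R/𝔭)(−t) → M^i → N^i → 0` and `0 → X^i → N^i → M^{i+1} → 0`).
Moreover `i₀ = ℓ_{R_𝔭}(M_𝔭)`. -/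
theorem stmt5 {A R M : Type*} [CommRing A] [IsArtinianRing A] [IsLocalRing A]
    [CommRing R] [Algebra A R] [IsNoetherianRing R]
    (𝒜 : ℤ → Submodule A R) [GradedAlgebra 𝒜]
    -- `R` is non-negatively graded with degree-zero part `A`, standard graded:
    (hneg : ∀ n < 0, 𝒜 n = ⊥) (h0 : 𝒜 0 = 1)
    (hstd : ∀ n : ℤ, 0 ≤ n → 𝒜 (n + 1) = 𝒜 1 * 𝒜 n)
    -- `𝔭 = 𝔪R` is a prime ideal:
    [hp : (Ideal.map (algebraMap A R) (maximalIdeal A)).IsPrime]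
    -- `M` is a nonzero finitely generated graded `R`-module:
    [AddCommGroup M] [Module A M] [Module R M] [IsScalarTower A R M] [Module.Finite R M]
    [Nontrivial M]
    (ℳ : ℤ → Submodule A M) [SetLike.GradedSMul 𝒜 ℳ] [DirectSum.Decomposition ℳ]
    -- `Ass_R M = {𝔭}` and `M = R·M_t`:
    (hAss : associatedPrimes R M = {Ideal.map (algebraMap A R) (maximalIdeal A)})
    (t : ℤ) (hgen : Submodule.span R (ℳ t : Set M) = ⊤) :
    ∃ (i₀ : ℕ) (K : ℕ → Submodule R M) (x : ℕ → M),
      K 0 = ⊥ ∧ K i₀ = ⊤ ∧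
      (∀ i < i₀,
        -- `K i` is graded, i.e. `M^i = M/K i` is a graded residue module of `M`:
        IsGradedSubmodule ℳ (K i) ∧
        -- (a) `Ass_R M^i = {𝔭}` and `M^i = R·(M^i)_t`:
        associatedPrimes R (M ⧸ K i) = {Ideal.map (algebraMap A R) (maximalIdeal A)} ∧
        K i ⊔ Submodule.span R (ℳ t : Set M) = ⊤ ∧
        -- (c) first exact sequence: `x i` has degree `t` and generates a copy of
        -- `(R/𝔭)(−t)` inside `M^i`:
        x i ∈ ℳ t ∧
        (∀ r : R, r • x i ∈ K i ↔ r ∈ Ideal.map (algebraMap A R) (maximalIdeal A)) ∧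
        -- (c) second exact sequence: `K i + R·x i ≤ K (i+1)`, so that
        -- `X^i = K (i+1)/(K i + R·x i)` sits in `0 → X^i → N^i → M^{i+1} → 0`:
        K i ⊔ Submodule.span R {x i} ≤ K (i + 1) ∧
        -- (b) `𝔭 ∉ Ass_R X^i`:
        Ideal.map (algebraMap A R) (maximalIdeal A) ∉
          associatedPrimes R
            ↥((K (i + 1)).map (K i ⊔ Submodule.span R {x i}).mkQ)) ∧
      -- furthermore, `i₀ = ℓ_{R_𝔭}(M_𝔭)`:
      (i₀ : ℤ) = locLength R (Ideal.map (algebraMap A R) (maximalIdeal A)) M := by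
  classical
  set p : Ideal R := Ideal.map (algebraMap A R) (maximalIdeal A) with hpdef
  have hp' : p.IsPrime := hp
  -- nilpotency of `p`
  obtain ⟨k, hk⟩ : IsNilpotent (maximalIdeal A) := by
    rw [← IsLocalRing.jacobson_eq_maximalIdeal (⊥ : Ideal A) bot_ne_top]
    exact IsArtinianRing.isNilpotent_jacobson_bot
  set ν : ℕ := k + 1 with hνdef
  have hmν : (maximalIdeal A) ^ ν = ⊥ := by
    rw [hνdef, pow_succ, hk]
    simp
  have hνp : ∀ h ∈ p, h ^ ν = 0 := by
    intro h hh
    have h1 : p ^ ν = ⊥ := by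
      rw [hpdef, ← Ideal.map_pow, hmν, Ideal.map_bot]
    have h2 := Ideal.pow_mem_pow hh ν
    rw [h1] at h2
    exact Ideal.mem_bot.mp h2
  have hν1 : 1 ≤ ν := by omega
  have hnil : ∀ P : Ideal R, P.IsPrime → p ≤ P := by
    intro P hP h hh
    exact hP.mem_of_pow_mem ν (by rw [hνp h hh]; exact P.zero_mem)
  -- the inductive step, by choice
  have hstep : ∀ K : Submodule R M, ∃ y : M × Submodule R M,
      (K = ⊤ → y.2 = ⊤) ∧
      ((IsGradedSubmodule ℳ K) → (∀ s : R, s ∉ p → ∀ m : M, s • m ∈ K → m ∈ K) →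
        (IsGradedSubmodule ℳ y.2 ∧ (∀ s : R, s ∉ p → ∀ m : M, s • m ∈ y.2 → m ∈ y.2))) ∧
      K ≤ y.2 ∧
      ((IsGradedSubmodule ℳ K) → (∀ s : R, s ∉ p → ∀ m : M, s • m ∈ K → m ∈ K) → K ≠ ⊤ →
        (y.1 ∈ ℳ t ∧ (∀ r : R, r • y.1 ∈ K ↔ r ∈ p) ∧
         K ⊔ Submodule.span R {y.1} ≤ y.2 ∧
         (∀ m ∈ y.2, ∃ s : R, s ∉ p ∧ s • m ∈ K ⊔ Submodule.span R {y.1}))) := by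
    intro K
    have htopgood : IsGradedSubmodule ℳ (⊤ : Submodule R M) ∧
        (∀ s : R, s ∉ p → ∀ m : M, s • m ∈ (⊤ : Submodule R M) → m ∈ ⊤) :=
      ⟨fun x _ n => Submodule.mem_top (R := R), fun _ _ m _ => Submodule.mem_top (R := R) (x := m)⟩
    by_cases hKtop : K = ⊤
    · exact ⟨(0, ⊤), fun _ => rfl, fun _ _ => htopgood, le_top,
        fun _ _ h => absurd hKtop h⟩
    by_cases hKgs : (IsGradedSubmodule ℳ K) ∧ (∀ s : R, s ∉ p → ∀ m : M, s • m ∈ K → m ∈ K)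
    · obtain ⟨hG, hS⟩ := hKgs
      have hAssK : associatedPrimes R (M ⧸ K) = {p} :=
        ass_quot_eq_singleton p hp' hnil K hKtop hS
      have hKt : ¬ ((ℳ t : Set M) ⊆ K) := by
        intro hsub
        exact hKtop (eq_top_iff.mpr (hgen ▸ Submodule.span_le.mpr hsub))
      obtain ⟨x, hxt, hxcolon⟩ := exists_socle_elt p ℳ t hp' K hKt (maximalIdeal A) ν hmν
        hpdef hAssK
      set J := K ⊔ Submodule.span R {x} with hJdef
      have hJgraded : ∀ z ∈ J, ∀ n : ℤ, ((DirectSum.decompose ℳ z n : ℳ n) : M) ∈ J :=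
        sup_graded ℳ hG (span_singleton_graded 𝒜 ℳ hxt)
      refine ⟨(x, Thom 𝒜 p hp' J), fun h => absurd h hKtop, fun _ _ => ?_,
        le_trans le_sup_left (le_Thom 𝒜 p hp' J), fun _ _ _ => ?_⟩
      · exact ⟨Thom_graded 𝒜 ℳ p hp' J hJgraded,
          thom_sat 𝒜 ℳ p hp' ν hν1 hνp J hJgraded⟩
      · refine ⟨hxt, hxcolon, le_Thom 𝒜 p hp' J, ?_⟩
        rintro m ⟨s, ⟨d, hd⟩, hsp, hsm⟩
        exact ⟨s, hsp, hsm⟩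
    · exact ⟨(0, ⊤), fun _ => rfl, fun _ _ => htopgood, le_top,
        fun hg hs _ => absurd ⟨hg, hs⟩ hKgs⟩
  choose F hF1 hF2 hF3 hF4 using hstep
  set Kseq : ℕ → Submodule R M := fun i => Nat.rec ⊥ (fun _ K => (F K).2) i with hKseqdef
  have hK0 : Kseq 0 = ⊥ := rfl
  have hKsucc : ∀ i, Kseq (i + 1) = (F (Kseq i)).2 := fun i => rfl
  have hGS : ∀ i, IsGradedSubmodule ℳ (Kseq i) ∧
      (∀ s : R, s ∉ p → ∀ m : M, s • m ∈ Kseq i → m ∈ Kseq i) := by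
    intro i
    induction i with
    | zero =>
        constructor
        · intro z hz n
          have hz0 : z = 0 := hz
          subst hz0
          rw [DirectSum.decompose_zero]
          simp
        · intro s hs m hsm
          have := sat_of_ass_singleton p (hpdef ▸ hAss) hs (Submodule.mem_bot R |>.mp hsm)
          exact (Submodule.mem_bot R).mpr this
    | succ i ih =>
        rw [hKsucc]
        exact hF2 _ ih.1 ih.2
  have hmono : Monotone Kseq := by
    apply monotone_nat_of_le_succ
    intro i
    rw [hKsucc]
    exact hF3 (Kseq i)
  have hexiststop : ∃ i, Kseq i = ⊤ := by
    by_contra htop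
    push_neg at htop
    have : IsNoetherian R M := inferInstance
    obtain ⟨n₀, hn₀⟩ := monotone_stabilizes_iff_noetherian.mpr this ⟨Kseq, hmono⟩
    obtain ⟨h1, h2, h3, h4⟩ := hF4 (Kseq n₀) (hGS n₀).1 (hGS n₀).2 (htop n₀)
    have hx1 : (F (Kseq n₀)).1 ∈ Kseq (n₀ + 1) := by
      rw [hKsucc]
      exact h3 (Submodule.mem_sup_right (Submodule.mem_span_singleton_self _))
    have heq : Kseq (n₀ + 1) = Kseq n₀ := (hn₀ (n₀ + 1) (by omega)).symm
    rw [heq] at hx1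
    have h1p : (1 : R) ∈ p := (h2 1).mp (by rwa [one_smul])
    exact hp'.ne_top ((Ideal.eq_top_iff_one p).mpr h1p)
  set i₀ := Nat.find hexiststop with hi₀def
  have hKi₀ : Kseq i₀ = ⊤ := Nat.find_spec hexiststop
  have hKlt : ∀ i < i₀, Kseq i ≠ ⊤ := fun i hi => Nat.find_min hexiststop hi
  have hspec : ∀ i < i₀,
      (F (Kseq i)).1 ∈ ℳ t ∧ (∀ r : R, r • (F (Kseq i)).1 ∈ Kseq i ↔ r ∈ p) ∧
      Kseq i ⊔ Submodule.span R {(F (Kseq i)).1} ≤ (F (Kseq i)).2 ∧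
      (∀ m ∈ (F (Kseq i)).2, ∃ s : R, s ∉ p ∧
        s • m ∈ Kseq i ⊔ Submodule.span R {(F (Kseq i)).1}) :=
    fun i hi => hF4 (Kseq i) (hGS i).1 (hGS i).2 (hKlt i hi)
  refine ⟨i₀, Kseq, fun i => (F (Kseq i)).1, hK0, hKi₀, ?_, ?_⟩
  · intro i hi
    obtain ⟨hxt, hxcolon, hxle, hxtors⟩ := hspec i hi
    refine ⟨(hGS i).1, ?_, ?_, hxt, hxcolon, ?_, ?_⟩
    · exact ass_quot_eq_singleton p hp' hnil (Kseq i) (hKlt i hi) (hGS i).2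
    · rw [hgen]
      exact sup_top_eq _
    · rw [hKsucc]
      exact hxle
    · rw [hKsucc]
      exact p_not_assoc_torsion p _ _ hxtors
  · -- the length computation
    have hmax : (p.map (algebraMap R (Localization p.primeCompl))).IsMaximal := by
      rw [Localization.AtPrime.map_eq_maximalIdeal]
      exact IsLocalRing.maximalIdeal.isMaximal _
    set WL : ℕ → Submodule (Localization p.primeCompl) (LocalizedModule p.primeCompl M) :=
      fun j => (Kseq j).localized' (Localization p.primeCompl) p.primeCompl
        (LocalizedModule.mkLinearMap p.primeCompl M) with hWLdef
    have hWL0 : WL 0 = ⊥ := by rw [hWLdef]; simp only [hK0, Submodule.localized'_bot]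
    have hWLtop : WL i₀ = ⊤ := by rw [hWLdef]; simp only [hKi₀, Submodule.localized'_top]
    have hWLcov : ∀ j < i₀, WL j ⋖ WL (j + 1) := by
      intro j hj
      obtain ⟨hxt, hxcolon, hxle, hxtors⟩ := hspec j hj
      have hloc1 : WL (j + 1) = (Kseq j ⊔ Submodule.span R {(F (Kseq j)).1}).localized'
          (Localization p.primeCompl) p.primeCompl
          (LocalizedModule.mkLinearMap p.primeCompl M) := by
        rw [hWLdef]
        simp only
        rw [hKsucc]
        exact localized_eq_of_sat p _ _ hxle hxtors
      rw [hloc1, localized_sup_span]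
      exact covby_of_colon_maximal _ _ _ hmax
        (localized_colon p (Kseq j) (hGS j).2 _ hxcolon)
    have hkd : Order.krullDim
        (Submodule (Localization p.primeCompl) (LocalizedModule p.primeCompl M)) = i₀ :=
      krullDim_eq_of_covby_chain i₀ WL hWL0 hWLtop hWLcov
    rw [locLength, moduleLength, hkd]
    norm_num
end

section
/- Let A = K[[X, Y]] be the formal power series ring over a field K with maximal ideal 𝔪 = (X, Y). Let 0 = n₁ < n₂ < ⋯ < n_s = t be integers and let I be the ideal generated by the monomials X^{n_i} Y^{t−n_i} for 1 ≤ i ≤ s (so Y^t, X^t ∈ I). Then Q = (X^t, Y^t) is a reduction of I. Furthermore, if Q ⊊ I ⊊ 𝔪^t and I² = 𝔪^{2t}, then red_Q I = 2. -/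
open Filter IsLocalRing

/-- The length `ℓ_A(N/(P ∩ N))` of the subquotient of two ideals; for `P ≤ N` this is
`ℓ_A(N/P)`. -/
noncomputable def quotLength {A : Type*} [CommRing A] (N P : Ideal A) : ℤ :=
  moduleLength A (↥N ⧸ Submodule.comap N.subtype P)

/-- There is a regular sequence of length `n` on the ring `T` consisting of elements
of the ideal `J`.  For a Noetherian ring `T` and a proper ideal `J` this says exactly
that `depth_J T ≥ n`. -/
def ExistsRegSeq (T : Type*) [CommRing T] (J : Ideal T) (n : ℕ) : Prop :=
  ∃ rs : List T, rs.length = n ∧ (∀ z ∈ rs, z ∈ J) ∧ RingTheory.Sequence.IsRegular T rs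

/-- The reduction number `red_Q I`: the least `n` with `I^(n+1) = Q·Iⁿ`. -/
noncomputable def redNum {A : Type*} [CommRing A] (Q I : Ideal A) : ℕ :=
  sInf {n : ℕ | I ^ (n + 1) = Q * I ^ n}

/-- The ideal `I·ℛ(I)` of the Rees algebra `ℛ(I)`. -/
noncomputable def reesIdeal {A : Type*} [CommRing A] (I : Ideal A) : Ideal (reesAlgebra I) :=
  I.map (algebraMap A (reesAlgebra I))

/-- The associated graded ring `𝒢(I) = ℛ(I)/I·ℛ(I) ≅ ⊕_{n≥0} Iⁿ/I^{n+1}`. -/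
abbrev AssocGradedRing {A : Type*} [CommRing A] (I : Ideal A) :=
  reesAlgebra I ⧸ reesIdeal I

/-- The graded maximal ideal `𝓜 = 𝔪𝒢(I) + 𝒢(I)₊` of the associated graded ring,
the image of `𝔪ℛ(I) + ℛ(I)₊` (the latter being generated by the elements `a·t`, `a ∈ I`,
of degree one). -/
noncomputable def grMaxIdeal {A : Type*} [CommRing A] [IsLocalRing A] (I : Ideal A) :
    Ideal (AssocGradedRing I) :=
  Ideal.map (Ideal.Quotient.mk (reesIdeal I))
    ((maximalIdeal A).map (algebraMap A (reesAlgebra I)) ⊔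
      Ideal.span {x : reesAlgebra I | ∃ a ∈ I, (x : Polynomial A) = Polynomial.C a * Polynomial.X})

/-- `z` is integral over the ideal `I`: it satisfies an equation
`zⁿ + a₁z^{n−1} + ⋯ + aₙ = 0` with `aᵢ ∈ Iⁱ`. -/
def IsIntegralOverIdeal {A : Type*} [CommRing A] (I : Ideal A) (z : A) : Prop :=
  ∃ (n : ℕ) (a : ℕ → A), 0 < n ∧ (∀ i, 1 ≤ i → i ≤ n → a i ∈ I ^ i) ∧
    z ^ n + ∑ i ∈ Finset.Icc 1 n, a i * z ^ (n - i) = 0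

/-- The ideal `I` is integrally closed (it contains every element integral over it). -/
def IsIntegrallyClosedIdeal {A : Type*} [CommRing A] (I : Ideal A) : Prop :=
  ∀ z : A, IsIntegralOverIdeal I z → z ∈ I

section AuxStmt16

open MvPowerSeries Pointwise

private lemma aux_sum_le {t : ℕ} {l : List ℕ} (h : ∀ a ∈ l, a ≤ t) : l.sum ≤ l.length * t := by
  simpa [smul_eq_mul] using List.sum_le_card_nsmul l t h

private lemma aux_pigeon (t : ℕ) (P : ℕ → Prop) (hP0 : P 0) (hPt : P t)
    (hle : ∀ a, P a → a ≤ t) (l : List ℕ) (hl : ∀ a ∈ l, P a) (hlen : l.length = t + 1) :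
    ∃ l' : List ℕ, (∀ a ∈ l', P a) ∧ l'.length = t ∧
      (l.sum = l'.sum ∨ l.sum = t + l'.sum) := by
  classical
  by_cases hz : (0 : ℕ) ∈ l
  · refine ⟨l.erase 0, fun a ha => hl a (List.mem_of_mem_erase ha), ?_, Or.inl ?_⟩
    · have := List.length_erase_add_one hz; omega
    · have := (List.perm_cons_erase hz).sum_eq; simpa using this
  by_cases hT : t ∈ l
  · refine ⟨l.erase t, fun a ha => hl a (List.mem_of_mem_erase ha), ?_, Or.inr ?_⟩
    · have := List.length_erase_add_one hT; omega
    · have := (List.perm_cons_erase hT).sum_eq; simpa using this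
  have hmem : ∀ a ∈ l, 1 ≤ a ∧ a ≤ t - 1 ∧ 2 ≤ t := by
    intro a ha
    have h1 := hle a (hl a ha)
    have h2 : a ≠ 0 := fun h => hz (h ▸ ha)
    have h3 : a ≠ t := fun h => hT (h ▸ ha)
    omega
  have ht2 : 2 ≤ t := by
    have hne : l ≠ [] := by intro h; rw [h] at hlen; simp at hlen
    obtain ⟨a, ha⟩ := List.exists_mem_of_ne_nil l hne
    exact (hmem a ha).2.2
  set p : ℕ → ℕ := fun j => (l.take j).sum with hp
  have hpigeon : ∃ i ∈ Finset.range (t + 1), ∃ j ∈ Finset.range (t + 1),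
      i ≠ j ∧ p i % t = p j % t := by
    apply Finset.exists_ne_map_eq_of_card_lt_of_maps_to (t := Finset.range t)
      (f := fun j => p j % t)
    · simp
    · intro a _
      simp only [Finset.mem_coe, Finset.mem_range]
      exact Nat.mod_lt _ (by omega)
  obtain ⟨i, hi, j, hj, hij, hmod⟩ := hpigeon
  wlog hlt : i < j generalizing i j
  · exact this j hj i hi hij.symm hmod.symm (by omega)
  simp only [Finset.mem_range] at hi hj
  set seg : List ℕ := (l.take j).drop i with hseg
  have htake : l.take i ++ seg = l.take j := by
    have h1 : (l.take j).take i ++ (l.take j).drop i = l.take j := List.take_append_drop _ _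
    rwa [List.take_take, min_eq_left hlt.le] at h1
  have hsum1 : p i + seg.sum = p j := by
    have := congrArg List.sum htake
    rw [List.sum_append] at this
    exact this
  have hldecomp : l.sum = p j + (l.drop j).sum := by
    conv_lhs => rw [← List.take_append_drop j l]
    rw [List.sum_append]
  have hseglen : seg.length = j - i := by
    simp only [hseg, List.length_drop, List.length_take, hlen]
    omega
  have hsegmem : ∀ a ∈ seg, 1 ≤ a ∧ a ≤ t - 1 := by
    intro a ha
    have := hmem a (List.mem_of_mem_take (List.mem_of_mem_drop ha))
    exact ⟨this.1, this.2.1⟩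
  have hlow : seg.length ≤ seg.sum := by
    simpa [smul_eq_mul] using List.card_nsmul_le_sum seg 1 (fun a ha => (hsegmem a ha).1)
  have hup : seg.sum ≤ seg.length * (t - 1) :=
    aux_sum_le (fun a ha => (hsegmem a ha).2)
  have hdvd : t ∣ (p j - p i) := (Nat.modEq_iff_dvd' (by omega : p i ≤ p j)).mp hmod
  obtain ⟨m, hm⟩ := hdvd
  have hsegsum : seg.sum = t * m := by omega
  have hm1 : m ≠ 0 := by
    rintro rfl
    rw [Nat.mul_zero] at hsegsum
    omega
  have hmL : m < j - i := by
    have e1 : (j - i) * (t - 1) + (j - i) = (j - i) * t := by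
      rw [← Nat.mul_succ]
      congr 1
      omega
    have h2 : t * m < t * (j - i) := by
      have h3 : t * m ≤ (j - i) * (t - 1) := by rw [← hsegsum, ← hseglen]; exact hup
      have h4 : (j - i) * t = t * (j - i) := Nat.mul_comm _ _
      omega
    exact Nat.lt_of_mul_lt_mul_left h2
  obtain ⟨m', rfl⟩ : ∃ m', m = m' + 1 := ⟨m - 1, by omega⟩
  refine ⟨List.replicate m' t ++ l.take i ++ l.drop j ++
      List.replicate (t - (m' + i + (t + 1 - j))) 0, ?_, ?_, Or.inr ?_⟩
  · intro a ha
    simp only [List.mem_append, List.mem_replicate] at ha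
    rcases ha with ((⟨_, rfl⟩ | h) | h) | ⟨_, rfl⟩
    · exact hPt
    · exact hl a (List.mem_of_mem_take h)
    · exact hl a (List.mem_of_mem_drop h)
    · exact hP0
  · simp only [List.length_append, List.length_replicate, List.length_take, List.length_drop,
      hlen, min_eq_left (by omega : i ≤ t + 1)]
    omega
  · simp only [List.sum_append, List.sum_replicate, smul_eq_mul, Nat.mul_zero]
    have hpi : (l.take i).sum = p i := rfl
    have e2 : t * (m' + 1) = m' * t + t := by ring
    rw [e2] at hsegsum
    obtain ⟨B, hB⟩ : ∃ B, m' * t = B := ⟨_, rfl⟩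
    rw [hB] at hsegsum ⊢
    rw [hpi]
    omega

private lemma aux_mem_pow_pair {R : Type*} [CommRing R] (x y : R) :
    ∀ (m : ℕ) (z : R), z ∈ (({x, y} : Set R) ^ m) → ∃ a, a ≤ m ∧ z = x ^ a * y ^ (m - a) := by
  intro m
  induction m with
  | zero =>
    intro z hz
    rw [pow_zero, Set.mem_one] at hz
    exact ⟨0, le_rfl, by simp [hz]⟩
  | succ k ih =>
    intro z hz
    rw [pow_succ] at hz
    obtain ⟨p, hp, q, hq, rfl⟩ := Set.mem_mul.mp hz
    obtain ⟨a, ha, rfl⟩ := ih p hp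
    simp only [Set.mem_insert_iff, Set.mem_singleton_iff] at hq
    rcases hq with rfl | rfl
    · exact ⟨a + 1, by omega, by rw [show k + 1 - (a + 1) = k - a from by omega, pow_succ]; ring⟩
    · exact ⟨a, by omega, by rw [show k + 1 - a = (k - a) + 1 from by omega, pow_succ]; ring⟩

private lemma aux_mem_pow_range {R : Type*} [CommRing R] {s t : ℕ} (x y : R) (n : Fin s → ℕ)
    (hn : ∀ i, n i ≤ t) :
    ∀ (m : ℕ) (z : R), z ∈ ((Set.range fun i : Fin s => x ^ n i * y ^ (t - n i)) ^ m) →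
      ∃ l : List ℕ, l.length = m ∧ (∀ a ∈ l, ∃ i, n i = a) ∧ l.sum ≤ m * t ∧
        z = x ^ l.sum * y ^ (m * t - l.sum) := by
  intro m
  induction m with
  | zero =>
    intro z hz
    rw [pow_zero, Set.mem_one] at hz
    exact ⟨[], rfl, by simp, by simp, by simp [hz]⟩
  | succ k ih =>
    intro z hz
    rw [pow_succ] at hz
    obtain ⟨p, hp, q, hq, rfl⟩ := Set.mem_mul.mp hz
    obtain ⟨l, hlen, hmem, hsum, rfl⟩ := ih p hp
    obtain ⟨i, rfl⟩ := hq
    refine ⟨n i :: l, by simp [hlen], ?_, ?_, ?_⟩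
    · intro a ha
      rcases List.mem_cons.mp ha with rfl | h
      exacts [⟨i, rfl⟩, hmem a h]
    · simp only [List.sum_cons]
      calc n i + l.sum ≤ t + k * t := add_le_add (hn i) hsum
        _ = (k + 1) * t := by ring
    · simp only [List.sum_cons]
      have e : (k + 1) * t - (n i + l.sum) = (k * t - l.sum) + (t - n i) := by
        have h2 : (k + 1) * t = k * t + t := by ring
        obtain ⟨B, hB⟩ : ∃ B, k * t = B := ⟨_, rfl⟩
        rw [h2, hB]
        rw [hB] at hsum
        have := hn i
        omega
      rw [e, pow_add, pow_add]
      ring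

private lemma aux_list_mem_pow {R : Type*} [CommRing R] {s t : ℕ} (x y : R) (n : Fin s → ℕ)
    (hn : ∀ i, n i ≤ t) :
    ∀ l : List ℕ, (∀ a ∈ l, ∃ i, n i = a) →
      x ^ l.sum * y ^ (l.length * t - l.sum) ∈
        (Ideal.span (Set.range fun i : Fin s => x ^ n i * y ^ (t - n i))) ^ l.length := by
  intro l
  induction l with
  | nil => intro _; simp [Ideal.one_eq_top]
  | cons a l ih =>
    intro hmem
    obtain ⟨i, hia⟩ := hmem a List.mem_cons_self
    have hsum : l.sum ≤ l.length * t := by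
      have hb : ∀ b ∈ l, b ≤ t := by
        intro b hb
        obtain ⟨i', hi'⟩ := hmem b (List.mem_cons_of_mem _ hb)
        exact hi' ▸ hn i'
      simpa [smul_eq_mul] using List.sum_le_card_nsmul l t hb
    have hat : a ≤ t := hia ▸ hn i
    simp only [List.sum_cons, List.length_cons]
    have e : (l.length + 1) * t - (a + l.sum) = (t - a) + (l.length * t - l.sum) := by
      have h2 : (l.length + 1) * t = l.length * t + t := by ring
      obtain ⟨B, hB⟩ : ∃ B, l.length * t = B := ⟨_, rfl⟩
      rw [h2, hB]
      rw [hB] at hsum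
      omega
    have key : x ^ (a + l.sum) * y ^ ((l.length + 1) * t - (a + l.sum)) =
        (x ^ l.sum * y ^ (l.length * t - l.sum)) * (x ^ a * y ^ (t - a)) := by
      rw [e, pow_add, pow_add]
      ring
    rw [key, pow_succ]
    exact Ideal.mul_mem_mul (ih fun b hb => hmem b (List.mem_cons_of_mem _ hb))
      (Ideal.subset_span ⟨i, by dsimp only; rw [hia]⟩)

private lemma aux_dvd {K : Type*} [Field K] (t : ℕ) (w v : MvPowerSeries (Fin 2) K)
    (h : (X 0 : MvPowerSeries (Fin 2) K) ^ t * w = (X 1 : MvPowerSeries (Fin 2) K) ^ t * v) :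
    ∃ v', v = (X 0 : MvPowerSeries (Fin 2) K) ^ t * v' := by
  classical
  have hv : ∀ d : Fin 2 →₀ ℕ, d 0 < t → coeff d v = 0 := by
    intro d hd
    have h1 : coeff (Finsupp.single 1 t + d) ((X 1 : MvPowerSeries (Fin 2) K) ^ t * v)
        = coeff d v := by
      rw [X_pow_eq, coeff_add_monomial_mul, one_mul]
    have h2 : coeff (Finsupp.single 1 t + d) ((X 0 : MvPowerSeries (Fin 2) K) ^ t * w) = 0 := by
      rw [X_pow_eq, coeff_monomial_mul, if_neg]
      intro hle
      have h3 := Finsupp.single_le_iff.mp hle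
      simp only [Finsupp.add_apply, Finsupp.single_apply] at h3
      rw [if_neg (by decide : ¬ (1 : Fin 2) = 0), zero_add] at h3
      omega
    rw [← h1, ← h, h2]
  refine ⟨show MvPowerSeries (Fin 2) K from fun d => coeff (d + Finsupp.single 0 t) v, ?_⟩
  ext d
  rw [X_pow_eq, coeff_monomial_mul]
  split_ifs with hle
  · rw [one_mul]
    have he : (d - Finsupp.single 0 t) + Finsupp.single 0 t = d := tsub_add_cancel_of_le hle
    calc coeff d v = coeff ((d - Finsupp.single 0 t) + Finsupp.single 0 t) v := by rw [he]
      _ = coeff (d - Finsupp.single 0 t)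
          (fun d => coeff (d + Finsupp.single 0 t) v : MvPowerSeries (Fin 2) K) := rfl
  · refine hv d ?_
    rw [Finsupp.single_le_iff] at hle
    omega

private lemma aux_X_ne_zero {K : Type*} [Field K] :
    (X 0 : MvPowerSeries (Fin 2) K) ≠ 0 := by
  classical
  intro h
  have h1 := congrArg (fun f => coeff (Finsupp.single 0 1) f) h
  simp only [map_zero] at h1
  rw [coeff_X, if_pos rfl] at h1
  exact one_ne_zero h1

set_option maxHeartbeats 2000000 in
private theorem stmt16_main {K : Type*} [Field K] (s t : ℕ) (hs : 0 < s)
    (n : Fin s → ℕ) (hmono : StrictMono n)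
    (h0 : n ⟨0, hs⟩ = 0) (hlast : n ⟨s - 1, Nat.sub_lt hs Nat.one_pos⟩ = t)
    (I : Ideal (MvPowerSeries (Fin 2) K))
    (hI : I = Ideal.span (Set.range fun i : Fin s =>
      (X 0 : MvPowerSeries (Fin 2) K) ^ n i * (X 1 : MvPowerSeries (Fin 2) K) ^ (t - n i)))
    (Q : Ideal (MvPowerSeries (Fin 2) K))
    (hQ : Q = Ideal.span {(X 0 : MvPowerSeries (Fin 2) K) ^ t,
      (X 1 : MvPowerSeries (Fin 2) K) ^ t}) :
    (∃ k : ℕ, I ^ (k + 1) = Q * I ^ k) ∧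
    (Q < I →
      I < (Ideal.span {(X 0 : MvPowerSeries (Fin 2) K), (X 1 : MvPowerSeries (Fin 2) K)}) ^ t →
      I ^ 2 =
        (Ideal.span {(X 0 : MvPowerSeries (Fin 2) K), (X 1 : MvPowerSeries (Fin 2) K)}) ^ (2 * t) →
      sInf {m : ℕ | I ^ (m + 1) = Q * I ^ m} = 2) := by
  classical
  have hn : ∀ i, n i ≤ t := by
    intro i
    have hle : i ≤ (⟨s - 1, Nat.sub_lt hs Nat.one_pos⟩ : Fin s) := by
      rw [Fin.le_def]
      have := i.2
      simp only
      omega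
    exact hlast ▸ hmono.monotone hle
  have hxI : (X 0 : MvPowerSeries (Fin 2) K) ^ t ∈ I := by
    rw [hI]
    refine Ideal.subset_span ⟨⟨s - 1, Nat.sub_lt hs Nat.one_pos⟩, ?_⟩
    dsimp only
    rw [hlast, Nat.sub_self, pow_zero, mul_one]
  have hyI : (X 1 : MvPowerSeries (Fin 2) K) ^ t ∈ I := by
    rw [hI]
    refine Ideal.subset_span ⟨⟨0, hs⟩, ?_⟩
    dsimp only
    rw [h0, pow_zero, one_mul, Nat.sub_zero]
  have hQleI : Q ≤ I := by
    rw [hQ]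
    refine Ideal.span_le.mpr ?_
    rintro z (rfl | rfl)
    exacts [hxI, hyI]
  have hxQ : (X 0 : MvPowerSeries (Fin 2) K) ^ t ∈ Q := by
    rw [hQ]; exact Ideal.subset_span (Set.mem_insert _ _)
  have hyQ : (X 1 : MvPowerSeries (Fin 2) K) ^ t ∈ Q := by
    rw [hQ]; exact Ideal.subset_span (Set.mem_insert_of_mem _ rfl)
  have hred : I ^ (t + 1) = Q * I ^ t := by
    apply le_antisymm
    · have hspan : I ^ (t + 1) = Ideal.span ((Set.range fun i : Fin s =>
          (X 0 : MvPowerSeries (Fin 2) K) ^ n i *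
            (X 1 : MvPowerSeries (Fin 2) K) ^ (t - n i)) ^ (t + 1)) := by
        rw [hI]; exact Submodule.span_pow _ _
      rw [hspan, Ideal.span_le]
      rintro z hz
      obtain ⟨l, hlen, hmeml, hsuml, rfl⟩ := aux_mem_pow_range _ _ n hn (t + 1) z hz
      obtain ⟨l', hl'mem, hl'len, hcase⟩ := aux_pigeon t (fun a => ∃ i, n i = a)
        ⟨⟨0, hs⟩, h0⟩ ⟨⟨s - 1, Nat.sub_lt hs Nat.one_pos⟩, hlast⟩
        (fun a ⟨i, hi⟩ => hi ▸ hn i) l hmeml hlen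
      have hl'sum : l'.sum ≤ t * t := by
        have h1 := aux_sum_le (t := t) (l := l') (fun a ha => by
          obtain ⟨i, hi⟩ := hl'mem a ha; exact hi ▸ hn i)
        rwa [hl'len] at h1
      have hW : (X 0 : MvPowerSeries (Fin 2) K) ^ l'.sum *
          (X 1 : MvPowerSeries (Fin 2) K) ^ (t * t - l'.sum) ∈ I ^ t := by
        have h1 := aux_list_mem_pow (X 0 : MvPowerSeries (Fin 2) K) (X 1) n hn l' hl'mem
        rw [hl'len] at h1
        rw [hI]
        exact h1
      rw [SetLike.mem_coe]
      obtain ⟨B, hB⟩ : ∃ B, t * t = B := ⟨_, rfl⟩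
      have htt : (t + 1) * t = t * t + t := by ring
      rcases hcase with hcs | hcs
      · have he : (t + 1) * t - l.sum = t + (t * t - l'.sum) := by
          rw [htt, hB]; rw [hB] at hl'sum; omega
        have hzz : (X 0 : MvPowerSeries (Fin 2) K) ^ l.sum *
            (X 1 : MvPowerSeries (Fin 2) K) ^ ((t + 1) * t - l.sum) =
            (X 1 : MvPowerSeries (Fin 2) K) ^ t *
              ((X 0 : MvPowerSeries (Fin 2) K) ^ l'.sum *
               (X 1 : MvPowerSeries (Fin 2) K) ^ (t * t - l'.sum)) := by
          rw [he, hcs, pow_add]; ring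
        rw [hzz]
        exact Ideal.mul_mem_mul hyQ hW
      · have he : (t + 1) * t - l.sum = t * t - l'.sum := by
          rw [htt, hB]; rw [hB] at hl'sum; omega
        have hzz : (X 0 : MvPowerSeries (Fin 2) K) ^ l.sum *
            (X 1 : MvPowerSeries (Fin 2) K) ^ ((t + 1) * t - l.sum) =
            (X 0 : MvPowerSeries (Fin 2) K) ^ t *
              ((X 0 : MvPowerSeries (Fin 2) K) ^ l'.sum *
               (X 1 : MvPowerSeries (Fin 2) K) ^ (t * t - l'.sum)) := by
          rw [he, hcs, pow_add]; ring
        rw [hzz]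
        exact Ideal.mul_mem_mul hxQ hW
    · calc Q * I ^ t ≤ I * I ^ t := Ideal.mul_mono_left hQleI
        _ = I ^ (t + 1) := (pow_succ' I t).symm
  refine ⟨⟨t, hred⟩, ?_⟩
  intro hQltI hIltM hI2
  set M : Ideal (MvPowerSeries (Fin 2) K) :=
    Ideal.span {(X 0 : MvPowerSeries (Fin 2) K), (X 1 : MvPowerSeries (Fin 2) K)} with hM
  have hxM : (X 0 : MvPowerSeries (Fin 2) K) ∈ M := by
    rw [hM]; exact Ideal.subset_span (Set.mem_insert _ _)
  have hyM : (X 1 : MvPowerSeries (Fin 2) K) ∈ M := by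
    rw [hM]; exact Ideal.subset_span (Set.mem_insert_of_mem _ rfl)
  have hmemM : ∀ a b m : ℕ, a + b = m →
      (X 0 : MvPowerSeries (Fin 2) K) ^ a * (X 1 : MvPowerSeries (Fin 2) K) ^ b ∈ M ^ m := by
    intro a b m hab
    rw [← hab, pow_add]
    exact Ideal.mul_mem_mul (Ideal.pow_mem_pow hxM a) (Ideal.pow_mem_pow hyM b)
  have ht1 : 1 ≤ t := by
    by_contra hc
    have ht0 : t = 0 := by omega
    have h1I : (1 : MvPowerSeries (Fin 2) K) ∈ I := by
      have h2 := hxI; rw [ht0, pow_zero] at h2; exact h2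
    have hIT : I = ⊤ := (Ideal.eq_top_iff_one I).mpr h1I
    have hMT : M ^ t = ⊤ := by rw [ht0, pow_zero, Ideal.one_eq_top]
    rw [hIT, hMT] at hIltM
    exact lt_irrefl _ hIltM
  have hwit : ∃ a, a ≤ t ∧ (X 0 : MvPowerSeries (Fin 2) K) ^ a *
      (X 1 : MvPowerSeries (Fin 2) K) ^ (t - a) ∉ I := by
    by_contra hcon
    push_neg at hcon
    apply hIltM.not_ge
    have hMt : M ^ t = Ideal.span ((({(X 0 : MvPowerSeries (Fin 2) K),
        (X 1 : MvPowerSeries (Fin 2) K)}) : Set _) ^ t) := by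
      rw [hM]; exact Submodule.span_pow _ _
    rw [hMt, Ideal.span_le]
    rintro z hz
    obtain ⟨a, ha, rfl⟩ := aux_mem_pow_pair _ _ t z hz
    exact hcon a ha
  obtain ⟨a, hat, haI⟩ := hwit
  have hQM : M ^ (2 * t) * I = Q * M ^ (2 * t) := by
    apply le_antisymm
    · have step : M ^ (2 * t + t) ≤ Q * M ^ (2 * t) := by
        have hMt : M ^ (2 * t + t) = Ideal.span ((({(X 0 : MvPowerSeries (Fin 2) K),
            (X 1 : MvPowerSeries (Fin 2) K)}) : Set _) ^ (2 * t + t)) := by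
          rw [hM]; exact Submodule.span_pow _ _
        rw [hMt, Ideal.span_le]
        rintro z hz
        obtain ⟨c, hc, rfl⟩ := aux_mem_pow_pair _ _ (2 * t + t) z hz
        rw [SetLike.mem_coe]
        by_cases htc : t ≤ c
        · have hzz : (X 0 : MvPowerSeries (Fin 2) K) ^ c *
              (X 1 : MvPowerSeries (Fin 2) K) ^ (2 * t + t - c) =
              (X 0 : MvPowerSeries (Fin 2) K) ^ t *
                ((X 0 : MvPowerSeries (Fin 2) K) ^ (c - t) *
                 (X 1 : MvPowerSeries (Fin 2) K) ^ (2 * t + t - c)) := by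
            rw [← mul_assoc, ← pow_add, show t + (c - t) = c from by omega]
          rw [hzz]
          exact Ideal.mul_mem_mul hxQ (hmemM _ _ _ (by omega))
        · have hzz : (X 0 : MvPowerSeries (Fin 2) K) ^ c *
              (X 1 : MvPowerSeries (Fin 2) K) ^ (2 * t + t - c) =
              (X 1 : MvPowerSeries (Fin 2) K) ^ t *
                ((X 0 : MvPowerSeries (Fin 2) K) ^ c *
                 (X 1 : MvPowerSeries (Fin 2) K) ^ (2 * t - c)) := by
            rw [show 2 * t + t - c = t + (2 * t - c) from by omega, pow_add]; ring
          rw [hzz]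
          exact Ideal.mul_mem_mul hyQ (hmemM _ _ _ (by omega))
      calc M ^ (2 * t) * I ≤ M ^ (2 * t) * M ^ t := Ideal.mul_mono_right hIltM.le
        _ = M ^ (2 * t + t) := (pow_add M (2 * t) t).symm
        _ ≤ Q * M ^ (2 * t) := step
    · calc Q * M ^ (2 * t) ≤ I * M ^ (2 * t) := Ideal.mul_mono_left hQleI
        _ = M ^ (2 * t) * I := mul_comm _ _
  have h2mem : I ^ (2 + 1) = Q * I ^ 2 := by
    rw [pow_succ, hI2]
    exact hQM
  have hnot0 : ¬ I ^ (0 + 1) = Q * I ^ 0 := by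
    intro h1
    rw [zero_add, pow_one, pow_zero, mul_one] at h1
    exact hQltI.ne' h1
  have hnot1 : ¬ I ^ (1 + 1) = Q * I ^ 1 := by
    intro h1
    rw [pow_one] at h1
    have hQIeq : Q * I = M ^ (2 * t) := by
      rw [← h1, show (1 + 1 : ℕ) = 2 from rfl]
      exact hI2
    have hmm : (X 0 : MvPowerSeries (Fin 2) K) ^ (t + a) *
        (X 1 : MvPowerSeries (Fin 2) K) ^ (t - a) ∈ Q * I := by
      rw [hQIeq]
      exact hmemM _ _ _ (by omega)
    rw [hQ, Ideal.span_insert, Submodule.sup_mul] at hmm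
    obtain ⟨u', hu', v', hv', heq⟩ := Submodule.mem_sup.mp hmm
    obtain ⟨u, huI, hu⟩ := Ideal.mem_span_singleton_mul.mp hu'
    obtain ⟨v, hvI, hv⟩ := Ideal.mem_span_singleton_mul.mp hv'
    rw [← hu, ← hv] at heq
    have heq2 : (X 0 : MvPowerSeries (Fin 2) K) ^ t *
        ((X 0 : MvPowerSeries (Fin 2) K) ^ a *
          (X 1 : MvPowerSeries (Fin 2) K) ^ (t - a) - u)
        = (X 1 : MvPowerSeries (Fin 2) K) ^ t * v := by
      rw [pow_add] at heq
      linear_combination -heq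
    obtain ⟨v2, hv2⟩ := aux_dvd t _ v heq2
    have hcancel : (X 0 : MvPowerSeries (Fin 2) K) ^ a *
        (X 1 : MvPowerSeries (Fin 2) K) ^ (t - a) - u =
        (X 1 : MvPowerSeries (Fin 2) K) ^ t * v2 := by
      have hne : (X 0 : MvPowerSeries (Fin 2) K) ^ t ≠ 0 := pow_ne_zero t aux_X_ne_zero
      apply mul_left_cancel₀ hne
      rw [heq2, hv2]; ring
    apply haI
    have hfin : (X 0 : MvPowerSeries (Fin 2) K) ^ a *
        (X 1 : MvPowerSeries (Fin 2) K) ^ (t - a) =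
        u + (X 1 : MvPowerSeries (Fin 2) K) ^ t * v2 := by
      rw [← hcancel]; ring
    rw [hfin]
    exact I.add_mem huI (Ideal.mul_mem_right v2 I hyI)
  have hmem2 : 2 ∈ {m : ℕ | I ^ (m + 1) = Q * I ^ m} := h2mem
  refine le_antisymm (Nat.sInf_le hmem2) ?_
  by_contra hcon
  push_neg at hcon
  have hk := Nat.sInf_mem (Set.nonempty_of_mem hmem2)
  obtain ⟨k, hkdef⟩ : ∃ k, sInf {m : ℕ | I ^ (m + 1) = Q * I ^ m} = k := ⟨_, rfl⟩
  rw [hkdef] at hcon hk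
  interval_cases k
  · exact hnot0 hk
  · exact hnot1 hk

end AuxStmt16


open MvPowerSeries in
/-- **Lemma 3.6(b)**: let `A = K[[X, Y]]` with maximal ideal `𝔪 = (X, Y)`, let
`0 = n₁ < n₂ < ⋯ < n_s = t` and let `I = (X^{nᵢ}·Y^{t−nᵢ} : 1 ≤ i ≤ s)`.
Then `Q = (X^t, Y^t)` is a reduction of `I`; moreover if `Q ⊊ I ⊊ 𝔪^t` and
`I² = 𝔪^{2t}`, then `red_Q I = 2`. -/
theorem stmt16 {K : Type*} [Field K] (s t : ℕ) (hs : 0 < s)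
    (n : Fin s → ℕ) (hmono : StrictMono n)
    (h0 : n ⟨0, hs⟩ = 0) (hlast : n ⟨s - 1, Nat.sub_lt hs Nat.one_pos⟩ = t)
    (I : Ideal (MvPowerSeries (Fin 2) K))
    (hI : I = Ideal.span (Set.range fun i : Fin s =>
      (X 0 : MvPowerSeries (Fin 2) K) ^ n i * (X 1 : MvPowerSeries (Fin 2) K) ^ (t - n i)))
    (Q : Ideal (MvPowerSeries (Fin 2) K))
    (hQ : Q = Ideal.span {(X 0 : MvPowerSeries (Fin 2) K) ^ t,
      (X 1 : MvPowerSeries (Fin 2) K) ^ t}) :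
    (∃ k : ℕ, I ^ (k + 1) = Q * I ^ k) ∧
    (Q < I →
      I < (Ideal.span {(X 0 : MvPowerSeries (Fin 2) K), (X 1 : MvPowerSeries (Fin 2) K)}) ^ t →
      I ^ 2 =
        (Ideal.span {(X 0 : MvPowerSeries (Fin 2) K), (X 1 : MvPowerSeries (Fin 2) K)}) ^ (2 * t) →
      redNum Q I = 2) := by
  have h := stmt16_main s t hs n hmono h0 hlast I hI Q hQ
  refine ⟨h.1, fun h1 h2 h3 => ?_⟩
  unfold redNum
  exact h.2 h1 h2 h3
end
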